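/- arXiv:1405.5800 — 4 statements merged into one kernel-verified Lean document; each statement's English description precedes it below -/
import Mathlib

section
/- Let q be a prime power and let c₁, c₂, c₃ ∈ 𝔽_q[t] \ {0} satisfy c₁ + c₂ + c₃ = 0. There exists a constant C > 0 depending only on q and c₁, c₂, c₃ such that for every integer n ≥ 2, if A ⊆ {f ∈ 𝔽_q[t] : deg f < n} contains no non-trivial solution to c₁x₁ + c₂x₂ + c₃x₃ = 0 with x₁, x₂, x₃ ∈ A, then |A| ≤ C · q^n · (log n)^2 / n. -/
open Finset Fintype Module

set_option maxHeartbeats 1000000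
section BloomFF



lemma exists_large_support {F ι : Type*} [Field F] [DecidableEq F] [Fintype ι] [DecidableEq ι]
    (V : Submodule F (ι → F)) :
    ∃ v ∈ V, Module.finrank F V ≤ (Finset.univ.filter (fun i => v i ≠ 0)).card := by
  classical
  set d := Module.finrank F V with hd
  let b : Basis (Fin d) F V := Module.finBasis F V
  let c : ι → (Fin d → F) := fun i k => (b k : ι → F) i
  have hspan : Submodule.span F (Set.range c) = ⊤ := by
    by_contra hn
    obtain ⟨φ, φne, hφ⟩ := Submodule.exists_dual_map_eq_bot_of_lt_top
      (lt_top_iff_ne_top.2 hn) inferInstance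
    set x : Fin d → F := fun k => φ (Pi.single k (1:F)) with hx
    have hφ' : ∀ y : Fin d → F, φ y = ∑ k, y k * x k := by
      intro y
      have hy : y = ∑ k, y k • (Pi.single k (1:F) : Fin d → F) := by
        ext j; simp [Pi.single_apply]
      conv_lhs => rw [hy]
      rw [map_sum]
      simp [hx]
    have hc0 : ∀ i, φ (c i) = 0 := by
      intro i
      have hmem : c i ∈ Submodule.span F (Set.range c) := Submodule.subset_span ⟨i, rfl⟩
      have := Submodule.mem_map_of_mem (f := φ) hmem
      rw [hφ] at this
      exact (Submodule.mem_bot F).1 this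
    have hx0 : x ≠ 0 := by
      intro h0
      apply φne
      apply LinearMap.ext
      intro y
      rw [hφ' y, h0]
      simp
    have hrepr : (∑ k, x k • b k : V) = 0 := by
      apply Subtype.ext
      ext i
      have h1 : ((∑ k, x k • b k : V) : ι → F) i = ∑ k, x k * c i k := by
        simp [c, smul_eq_mul]
      have h2 : ∑ k, x k * c i k = φ (c i) := by
        rw [hφ' (c i)]
        exact Finset.sum_congr rfl fun k _ => mul_comm _ _
      rw [h1, h2, hc0 i]
      simp
    have hind := b.linearIndependent
    rw [Fintype.linearIndependent_iff] at hind
    exact hx0 (funext (hind x hrepr))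
  obtain ⟨s, hsub, hspan', hind⟩ := exists_linearIndependent F (Set.range c)
  rw [hspan] at hspan'
  have hfin : s.Finite := hind.setFinite
  haveI := hfin.fintype
  let B2 : Basis s F (Fin d → F) := Basis.mk hind (by rw [Subtype.range_coe]; exact hspan'.ge)
  have hcards : Fintype.card s = d := by
    have h3 := Module.finrank_eq_card_basis B2
    rw [Module.finrank_fintype_fun_eq_card] at h3
    simpa using h3.symm
  have hg : ∀ y : s, ∃ i : ι, c i = (y : Fin d → F) := fun y => hsub y.2
  choose g hgc using hg
  have hginj : Function.Injective g := by
    intro y₁ y₂ h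
    apply Subtype.ext
    rw [← hgc y₁, ← hgc y₂, h]
  let L : (Fin d → F) →ₗ[F] (s → F) :=
    { toFun := fun x => fun y => ∑ k, x k * (y : Fin d → F) k
      map_add' := by intro a b; ext y; simp [add_mul, Finset.sum_add_distrib]
      map_smul' := by intro m a; ext y; simp [Finset.mul_sum, mul_assoc] }
  have hLinj : Function.Injective L := by
    rw [← LinearMap.ker_eq_bot, Submodule.eq_bot_iff]
    intro x hxk
    have hker : ∀ y ∈ s, ∑ k, x k * y k = 0 := by
      intro y hy
      have hx0 : L x = 0 := hxk
      exact congrFun hx0 ⟨y, hy⟩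
    have hall : ∀ y : Fin d → F, ∑ k, x k * y k = 0 := by
      intro y
      have hy : y ∈ Submodule.span F s := by rw [hspan']; trivial
      induction hy using Submodule.span_induction with
      | mem z hz => exact hker z hz
      | zero => simp
      | add a b _ _ ha hb => simp [mul_add, Finset.sum_add_distrib, ha, hb]
      | smul m a _ ha =>
          simp only [Pi.smul_apply, smul_eq_mul, mul_left_comm]
          rw [← Finset.mul_sum, ha, mul_zero]
    ext k
    have := hall (Pi.single k 1)
    simpa [Pi.single_apply, mul_comm] using this
  have hLsurj : Function.Surjective L := by
    have hdim : Module.finrank F (Fin d → F) = Module.finrank F (s → F) := by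
      simp [Module.finrank_fintype_fun_eq_card, hcards]
    exact (LinearMap.injective_iff_surjective_of_finrank_eq_finrank hdim).1 hLinj
  obtain ⟨x, hxL⟩ := hLsurj (fun _ => 1)
  refine ⟨((∑ k, x k • b k : V) : ι → F), (∑ k, x k • b k : V).2, ?_⟩
  have hval : ∀ y : s, ((∑ k, x k • b k : V) : ι → F) (g y) = 1 := by
    intro y
    have h1 : ((∑ k, x k • b k : V) : ι → F) (g y) = ∑ k, x k * c (g y) k := by
      simp [c, smul_eq_mul]
    rw [h1, hgc y]
    exact congrFun hxL y
  have hle : (Finset.univ : Finset s).card ≤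
      (Finset.univ.filter (fun i => ((∑ k, x k • b k : V) : ι → F) i ≠ 0)).card := by
    apply Finset.card_le_card_of_injOn g
    · intro y _
      simp only [Finset.mem_coe, Finset.mem_filter, Finset.mem_univ, true_and]
      rw [hval y]; exact one_ne_zero
    · intro a _ b _ h; exact hginj h
  rw [Finset.card_univ, hcards] at hle
  exact hle



lemma exists_annihilating_large_support {F ι κ : Type*} [Field F] [DecidableEq F]
    [Fintype ι] [DecidableEq ι] [DecidableEq κ]
    (Γ : Finset κ) (w : κ → ι → F) :
    ∃ h : ι → F, (∀ γ ∈ Γ, ∑ i, h i * w γ i = 0) ∧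
      Fintype.card ι ≤ Γ.card + (Finset.univ.filter (fun i => h i ≠ 0)).card := by
  classical
  let Φ : (ι → F) →ₗ[F] (Γ → F) :=
    { toFun := fun h => fun γ => ∑ i, h i * w γ i
      map_add' := by intro a b; ext γ; simp [add_mul, Finset.sum_add_distrib]
      map_smul' := by intro m a; ext γ; simp [Finset.mul_sum, mul_assoc] }
  obtain ⟨v, hv, hsupp⟩ := exists_large_support (LinearMap.ker Φ)
  refine ⟨v, ?_, ?_⟩
  · intro γ hγ
    have : Φ v = 0 := hv
    exact congrFun this ⟨γ, hγ⟩
  · have hrank := LinearMap.finrank_range_add_finrank_ker Φ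
    rw [Module.finrank_fintype_fun_eq_card] at hrank
    have hrle : Module.finrank F (LinearMap.range Φ) ≤ Γ.card := by
      have := Submodule.finrank_le (LinearMap.range Φ)
      rwa [Module.finrank_fintype_fun_eq_card, Fintype.card_coe] at this
    omega


lemma diag_le {F ι κ : Type*} [Field F] [DecidableEq F] [Fintype ι] [DecidableEq ι]
    [DecidableEq κ] (Γ : Finset κ) (h : ι → F) (P Q U V : κ → ι → F)
    (hid : ∀ x y : ι, (if x = y then h x else 0)
      = (∑ α ∈ Γ, U α x * P α y) + (∑ β ∈ Γ, Q β x * V β y)) :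
    (Finset.univ.filter (fun i => h i ≠ 0)).card ≤ 2 * Γ.card := by
  classical
  let W : Submodule F (ι → F) := Submodule.span F ((Γ.image P ∪ Γ.image V : Finset (ι → F)) : Set (ι → F))
  have hrow : ∀ x : ι, Pi.single x (h x) ∈ W := by
    intro x
    have heq : Pi.single x (h x) = (∑ α ∈ Γ, U α x • P α) + (∑ β ∈ Γ, Q β x • V β) := by
      funext y
      have := hid x y
      simp only [Pi.add_apply, Finset.sum_apply, Pi.smul_apply, smul_eq_mul]
      rw [Pi.single_apply]
      simpa [eq_comm] using this
    rw [heq]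
    apply Submodule.add_mem
    · exact Submodule.sum_mem _ (fun α hα => Submodule.smul_mem _ _
        (Submodule.subset_span (by simp; exact Or.inl ⟨α, hα, rfl⟩)))
    · exact Submodule.sum_mem _ (fun β hβ => Submodule.smul_mem _ _
        (Submodule.subset_span (by simp; exact Or.inr ⟨β, hβ, rfl⟩)))
  set S := Finset.univ.filter (fun i => h i ≠ 0) with hS
  let f : ↥S → (ι → F) := fun x => Pi.single (x : ι) (h x)
  have hne : ∀ x : ↥S, h (x : ι) ≠ 0 := by
    intro x
    have h2 := x.2
    simp only [hS, Finset.mem_filter] at h2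
    exact h2.2
  have hind : LinearIndependent F f := by
    rw [Fintype.linearIndependent_iff]
    intro g hg x
    have hx := congrFun hg (x : ι)
    simp only [Finset.sum_apply, Pi.smul_apply, smul_eq_mul, f, Pi.single_apply,
      Pi.zero_apply] at hx
    rw [Finset.sum_eq_single x] at hx
    · simp only [if_pos rfl] at hx
      rcases mul_eq_zero.1 hx with h' | h'
      · exact h'
      · exact absurd h' (hne x)
    · intro b _ hb
      rw [if_neg (fun hc => hb (Subtype.ext hc.symm)), mul_zero]
    · intro hx'
      exact absurd (Finset.mem_univ x) hx'
  have hcard : S.card = finrank F (Submodule.span F (Set.range f)) := by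
    rw [finrank_span_eq_card hind, Fintype.card_coe]
  have hle1 : Submodule.span F (Set.range f) ≤ W := by
    rw [Submodule.span_le]
    rintro - ⟨x, rfl⟩
    exact hrow x
  have hle2 : finrank F W ≤ 2 * Γ.card := by
    have := finrank_span_finset_le_card (R := F) (Γ.image P ∪ Γ.image V)
    calc finrank F W ≤ (Γ.image P ∪ Γ.image V).card := this
      _ ≤ (Γ.image P).card + (Γ.image V).card := Finset.card_union_le _ _
      _ ≤ Γ.card + Γ.card := Nat.add_le_add (Finset.card_image_le) (Finset.card_image_le)
      _ = 2 * Γ.card := by ring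
  calc S.card = finrank F (Submodule.span F (Set.range f)) := hcard
    _ ≤ finrank F W := Submodule.finrank_mono hle1
    _ ≤ 2 * Γ.card := hle2


def Eset (N : ℕ) : Finset (ℕ × ℕ × ℕ) :=
  ((range (N+1)) ×ˢ (range (N+1)) ×ˢ (range (N+1))).filter
    (fun e => e.1 + e.2.1 + e.2.2 ≤ N)

lemma trinomial {F : Type*} [CommRing F] (N : ℕ) (u v w : F) :
    (u + v + w)^N = ∑ e ∈ (Eset N).filter (fun e => e.1 + e.2.1 + e.2.2 = N),
      ((Nat.choose N e.1 * Nat.choose (N - e.1) e.2.1 : ℕ) : F) * u^e.1 * v^e.2.1 * w^e.2.2 := by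
  rw [add_assoc, add_pow]
  have step : ∀ a ∈ range (N+1), u^a * (v+w)^(N-a) * (Nat.choose N a : F)
      = ∑ b ∈ range (N-a+1), ((Nat.choose N a * Nat.choose (N-a) b : ℕ) : F)
          * u^a * v^b * w^(N-a-b) := by
    intro a _
    rw [add_pow, Finset.mul_sum, Finset.sum_mul]
    apply Finset.sum_congr rfl
    intro b _
    push_cast
    ring
  rw [Finset.sum_congr rfl step, Finset.sum_sigma']
  apply Finset.sum_nbij' (i := fun p => (p.1, p.2, N - p.1 - p.2))
    (j := fun e => ⟨e.1, e.2.1⟩)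
  · intro p hp
    simp only [Finset.mem_sigma, Finset.mem_range] at hp
    simp only [Eset, Finset.mem_filter, Finset.mem_product, Finset.mem_range]
    omega
  · intro e he
    simp only [Eset, Finset.mem_filter, Finset.mem_product, Finset.mem_range] at he
    simp only [Finset.mem_sigma, Finset.mem_range]
    omega
  · intro p hp
    simp
  · intro e he
    simp only [Eset, Finset.mem_filter, Finset.mem_product, Finset.mem_range] at he
    simp only []
    ext <;> simp <;> omega
  · intro p hp
    simp




private lemma exists_kappa {F : Type*} [CommRing F] (N : ℕ) (hN : 1 ≤ N) :
    ∃ κ : ℕ×ℕ×ℕ → F, ∀ u v w : F,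
      1 - (u+v+w)^N = ∑ e ∈ Eset N, κ e * u^e.1 * v^e.2.1 * w^e.2.2 := by
  classical
  refine ⟨fun e => (if e = ((0:ℕ),(0:ℕ),(0:ℕ)) then 1 else 0)
    - (if e.1+e.2.1+e.2.2 = N then ((Nat.choose N e.1 * Nat.choose (N-e.1) e.2.1 : ℕ):F) else 0),
    fun u v w => ?_⟩
  have hsplit : ∀ e : ℕ×ℕ×ℕ,
      ((if e = ((0:ℕ),(0:ℕ),(0:ℕ)) then (1:F) else 0)
        - (if e.1+e.2.1+e.2.2 = N then ((Nat.choose N e.1 * Nat.choose (N-e.1) e.2.1 : ℕ):F) else 0))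
        * u^e.1 * v^e.2.1 * w^e.2.2
      = (if e = ((0:ℕ),(0:ℕ),(0:ℕ)) then u^e.1 * v^e.2.1 * w^e.2.2 else 0)
        - (if e.1+e.2.1+e.2.2 = N
            then ((Nat.choose N e.1 * Nat.choose (N-e.1) e.2.1 : ℕ):F) * u^e.1 * v^e.2.1 * w^e.2.2
            else 0) := by
    intro e
    split <;> split <;> ring
  rw [Finset.sum_congr rfl (fun e _ => hsplit e), Finset.sum_sub_distrib]
  have h1 : ∑ e ∈ Eset N, (if e = ((0:ℕ),(0:ℕ),(0:ℕ)) then u^e.1 * v^e.2.1 * w^e.2.2 else 0)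
      = 1 := by
    rw [Finset.sum_ite_eq' (Eset N) ((0:ℕ),(0:ℕ),(0:ℕ))
      (fun e => u^e.1 * v^e.2.1 * w^e.2.2)]
    rw [if_pos (by simp [Eset])]
    simp
  have h2 : ∑ e ∈ Eset N, (if e.1+e.2.1+e.2.2 = N
      then ((Nat.choose N e.1 * Nat.choose (N-e.1) e.2.1 : ℕ):F) * u^e.1 * v^e.2.1 * w^e.2.2
      else 0) = (u+v+w)^N := by
    rw [← Finset.sum_filter, ← trinomial]
  rw [h1, h2]


private def dd (q : ℕ) (i : ℕ) : ℤ := (i:ℤ)*2 - ((q:ℤ) - 1)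

private def Vq (q : ℕ) : ℤ := ∑ i ∈ range q, (dd q i)^2

private lemma Vq_nonneg (q : ℕ) : 0 ≤ Vq q :=
  Finset.sum_nonneg fun i _ => sq_nonneg _

private lemma sum_dd (q : ℕ) (hq : 1 ≤ q) : ∑ i ∈ range q, dd q i = 0 := by
  have h := Finset.sum_range_id_mul_two q
  have h1 : (∑ i ∈ range q, (i:ℤ)) * 2 = (q:ℤ) * ((q:ℤ) - 1) := by
    have h2 := congrArg (fun z : ℕ => (z:ℤ)) h
    simp only [Nat.cast_mul, Nat.cast_sub hq] at h2
    push_cast at h2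
    convert h2 using 2
  unfold dd
  rw [Finset.sum_sub_distrib, ← Finset.sum_mul, h1, Finset.sum_const, card_range,
    nsmul_eq_mul]
  ring

private lemma momentB (q m : ℕ) (hq : 1 ≤ q) (j : Fin m) :
    ∑ α ∈ piFinset (fun _ : Fin m => range q), (dd q (α j))^2
      = Vq q * (q:ℤ)^(m-1) := by
  have hper : ∀ α : Fin m → ℕ,
      (dd q (α j))^2 = ∏ i : Fin m, (if j = i then (dd q (α i))^2 else 1) := by
    intro α
    rw [Finset.prod_ite_eq]
    simp
  rw [Finset.sum_congr rfl (fun α _ => hper α),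
    ← Finset.prod_univ_sum (fun _ : Fin m => range q)
      (fun i x => if j = i then (dd q x)^2 else 1)]
  have hfac : ∀ i : Fin m, (∑ x ∈ range q, (if j = i then (dd q x)^2 else 1))
      = if j = i then Vq q else (q:ℤ) := by
    intro i
    by_cases h : j = i <;> simp [h, Vq]
  rw [Finset.prod_congr rfl (fun i _ => hfac i)]
  rw [← Finset.mul_prod_erase Finset.univ _ (Finset.mem_univ j)]
  rw [if_pos rfl]
  congr 1
  rw [Finset.prod_congr rfl (fun i hi => if_neg (by
    intro h; rw [h] at hi; exact (Finset.mem_erase.1 hi).1 rfl))]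
  rw [Finset.prod_const, Finset.card_erase_of_mem (Finset.mem_univ j), Finset.card_univ,
    Fintype.card_fin]

private lemma momentA (q m : ℕ) (hq : 1 ≤ q) (j k : Fin m) (hjk : j ≠ k) :
    ∑ α ∈ piFinset (fun _ : Fin m => range q), dd q (α j) * dd q (α k) = 0 := by
  have hper : ∀ α : Fin m → ℕ,
      dd q (α j) * dd q (α k)
        = ∏ i : Fin m, (if i = j then dd q (α i) else if i = k then dd q (α i) else 1) := by
    intro α
    rw [← Finset.mul_prod_erase Finset.univ _ (Finset.mem_univ j), if_pos rfl]
    congr 1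
    rw [← Finset.mul_prod_erase _ _ (Finset.mem_erase.2 ⟨Ne.symm hjk, Finset.mem_univ k⟩),
      if_neg (Ne.symm hjk), if_pos rfl]
    rw [Finset.prod_congr rfl (fun i hi => ?_), Finset.prod_const_one, mul_one]
    have hi' := Finset.mem_erase.1 hi
    have hi'' := Finset.mem_erase.1 hi'.2
    rw [if_neg hi''.1, if_neg hi'.1]
  rw [Finset.sum_congr rfl (fun α _ => hper α),
    ← Finset.prod_univ_sum (fun _ : Fin m => range q)
      (fun i x => if i = j then dd q x else if i = k then dd q x else 1)]
  apply Finset.prod_eq_zero (Finset.mem_univ j)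
  rw [Finset.sum_congr rfl (fun x _ => by rw [if_pos rfl])]
  exact sum_dd q hq

private lemma second_moment (q m : ℕ) (hq : 1 ≤ q) :
    ∑ α ∈ piFinset (fun _ : Fin m => range q), (∑ j, dd q (α j))^2
      = (m:ℤ) * Vq q * (q:ℤ)^(m-1) := by
  have hexp : ∀ α : Fin m → ℕ,
      (∑ j, dd q (α j))^2 = ∑ j, ∑ k, dd q (α j) * dd q (α k) := by
    intro α
    rw [sq, Finset.sum_mul_sum]
  rw [Finset.sum_congr rfl (fun α _ => hexp α), Finset.sum_comm]
  have hin : ∀ j : Fin m,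
      ∑ α ∈ piFinset (fun _ : Fin m => range q), ∑ k, dd q (α j) * dd q (α k)
        = Vq q * (q:ℤ)^(m-1) := by
    intro j
    rw [Finset.sum_comm]
    have : ∀ k : Fin m, ∑ α ∈ piFinset (fun _ : Fin m => range q),
        dd q (α j) * dd q (α k) = if k = j then Vq q * (q:ℤ)^(m-1) else 0 := by
      intro k
      by_cases h : k = j
      · subst h
        rw [if_pos rfl]
        have : ∀ α : Fin m → ℕ, dd q (α k) * dd q (α k) = (dd q (α k))^2 := by
          intro α; rw [sq]
        rw [Finset.sum_congr rfl (fun α _ => this α)]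
        exact momentB q m hq k
      · rw [if_neg h]
        exact momentA q m hq j k (fun hc => h (hc.symm))
    rw [Finset.sum_congr rfl (fun k _ => this k), Finset.sum_ite_eq' Finset.univ j]
    simp
  rw [Finset.sum_congr rfl (fun j _ => hin j), Finset.sum_const, Finset.card_univ,
    Fintype.card_fin, nsmul_eq_mul]
  ring

private lemma count_lemma (q m s : ℕ) (hq : 2 ≤ q) (hm : 1 ≤ m) (hs : 3*s ≤ (q-1)*m) :
    ((piFinset fun _ : Fin m => range q).filter (fun α => ∑ j, α j ≤ s)).card * m
      ≤ 9 * (Vq q).toNat * q^(m-1) := by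
  have hq1 : 1 ≤ q := le_trans (by norm_num) hq
  set Γ := (piFinset fun _ : Fin m => range q).filter (fun α => ∑ j, α j ≤ s) with hΓ
  have key : ∀ α ∈ Γ, (m:ℤ)^2 ≤ 9 * (∑ j, dd q (α j))^2 := by
    intro α hα
    rw [hΓ, Finset.mem_filter] at hα
    have hT : (∑ j, (α j : ℤ)) ≤ (s:ℤ) := by
      have := hα.2
      calc (∑ j, (α j : ℤ)) = ((∑ j, α j : ℕ) : ℤ) := by push_cast; rfl
        _ ≤ (s:ℤ) := by exact_mod_cast this
    have hD : ∑ j, dd q (α j) = 2 * (∑ j, (α j : ℤ)) - ((q:ℤ)-1) * m := by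
      unfold dd
      rw [Finset.sum_sub_distrib, Finset.sum_const, Finset.card_univ, Fintype.card_fin,
        nsmul_eq_mul, ← Finset.sum_mul]
      ring
    have hgap : (m:ℤ) ≤ 3 * (((q:ℤ)-1) * m - 2 * (∑ j, (α j : ℤ))) := by
      have hsz : (3:ℤ) * s ≤ ((q:ℤ)-1) * m := by
        have := hs
        have hc : ((3*s : ℕ) : ℤ) ≤ (((q-1)*m : ℕ) : ℤ) := by exact_mod_cast this
        rw [Nat.cast_mul, Nat.cast_mul, Nat.cast_sub hq1] at hc
        push_cast at hc ⊢
        linarith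
      have hqm : (m:ℤ) ≤ ((q:ℤ)-1) * m := by
        have : (1:ℤ) ≤ (q:ℤ) - 1 := by
          have : (2:ℤ) ≤ (q:ℤ) := by exact_mod_cast hq
          linarith
        nlinarith [Int.ofNat_nonneg m]
      linarith
    rw [hD]
    nlinarith [hgap]
  have hsub : Γ ⊆ piFinset fun _ : Fin m => range q := Finset.filter_subset _ _
  have hbound : (Γ.card : ℤ) * m^2 ≤ 9 * ((m:ℤ) * Vq q * (q:ℤ)^(m-1)) := by
    calc (Γ.card : ℤ) * m^2 = ∑ _α ∈ Γ, (m:ℤ)^2 := by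
          rw [Finset.sum_const, nsmul_eq_mul]
      _ ≤ ∑ α ∈ Γ, 9 * (∑ j, dd q (α j))^2 := Finset.sum_le_sum key
      _ ≤ ∑ α ∈ piFinset (fun _ : Fin m => range q), 9 * (∑ j, dd q (α j))^2 := by
          apply Finset.sum_le_sum_of_subset_of_nonneg hsub
          intro α _ _
          positivity
      _ = 9 * ((m:ℤ) * Vq q * (q:ℤ)^(m-1)) := by
          rw [← Finset.mul_sum, second_moment q m hq1]
  have hfinal : (Γ.card : ℤ) * m ≤ 9 * Vq q * (q:ℤ)^(m-1) := by
    have hm' : (0:ℤ) < m := by exact_mod_cast hm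
    have := hbound
    nlinarith [this, hm']
  have : ((Γ.card * m : ℕ) : ℤ) ≤ ((9 * (Vq q).toNat * q^(m-1) : ℕ) : ℤ) := by
    push_cast
    rw [Int.toNat_of_nonneg (Vq_nonneg q)]
    exact hfinal
  exact_mod_cast this






private lemma main_card_bound {F : Type*} [Field F] [Fintype F] [DecidableEq F]
    (c₁ c₂ c₃ : Polynomial F) (hsum : c₁ + c₂ + c₃ = 0) (m : ℕ)
    (A : Finset (Polynomial F))
    (hdeg : ∀ x ∈ A, ∀ y ∈ A, ∀ z ∈ A, (c₁*x + c₂*y + c₃*z).degree < (m:ℕ))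
    (hfree : ∀ x₁ ∈ A, ∀ x₂ ∈ A, ∀ x₃ ∈ A,
      c₁ * x₁ + c₂ * x₂ + c₃ * x₃ = 0 → x₁ = x₂ ∧ x₂ = x₃) :
    A.card ≤ 3 * ((piFinset fun _ : Fin m => range (Fintype.card F)).filter
      (fun α => ∑ j, α j ≤ (Fintype.card F - 1) * m / 3)).card := by
  classical
  set q := Fintype.card F with hqdef
  have hq : 2 ≤ q := Fintype.one_lt_card
  set N := q - 1 with hN
  have hN1 : 1 ≤ N := by omega
  have hNq : N + 1 = q := by omega
  set s := N * m / 3 with hs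
  set Γ := (piFinset fun _ : Fin m => range q).filter (fun α => ∑ j, α j ≤ s) with hΓ
  obtain ⟨κ, hκ⟩ := exists_kappa (F := F) N hN1
  -- linear forms
  set u : Fin m → Polynomial F → F := fun j x => (c₁ * x).coeff j with hu
  set v : Fin m → Polynomial F → F := fun j y => (c₂ * y).coeff j with hv
  set w : Fin m → Polynomial F → F := fun j z => (c₃ * z).coeff j with hw
  set T : Polynomial F → Polynomial F → Polynomial F → F :=
    fun x y z => ∏ j : Fin m, (1 - (u j x + v j y + w j z)^N) with hT
  have hcoeff : ∀ x y z : Polynomial F, ∀ j : Fin m,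
      (c₁*x + c₂*y + c₃*z).coeff j = u j x + v j y + w j z := by
    intro x y z j
    simp [hu, hv, hw, Polynomial.coeff_add]
  -- value dichotomy
  have hT1 : ∀ x y z : Polynomial F, c₁*x + c₂*y + c₃*z = 0 → T x y z = 1 := by
    intro x y z h0
    rw [hT]
    apply Finset.prod_eq_one
    intro j _
    have : u j x + v j y + w j z = 0 := by
      rw [← hcoeff x y z j, h0, Polynomial.coeff_zero]
    rw [this, zero_pow (by omega : N ≠ 0), sub_zero]
  have hT0 : ∀ x ∈ A, ∀ y ∈ A, ∀ z ∈ A, c₁*x + c₂*y + c₃*z ≠ 0 → T x y z = 0 := by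
    intro x hx y hy z hz h0
    set P := c₁*x + c₂*y + c₃*z with hP
    have hdlt : P.natDegree < m := by
      rw [Polynomial.natDegree_lt_iff_degree_lt h0]
      exact hdeg x hx y hy z hz
    have hc : P.coeff P.natDegree ≠ 0 := Polynomial.leadingCoeff_ne_zero.mpr h0
    rw [hT]
    apply Finset.prod_eq_zero (Finset.mem_univ (⟨P.natDegree, hdlt⟩ : Fin m))
    rw [← hcoeff x y z]
    have : P.coeff P.natDegree ^ N = 1 := by
      rw [hN, hqdef]
      exact FiniteField.pow_card_sub_one_eq_one _ hc
    simp only [hP] at this ⊢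
    rw [this, sub_self]
  -- expansion
  set G := piFinset (fun _ : Fin m => Eset N) with hG
  set K : (Fin m → ℕ×ℕ×ℕ) → F := fun g => ∏ j, κ (g j) with hK
  set PU : (Fin m → ℕ) → Polynomial F → F := fun α x => ∏ j, (u j x)^(α j) with hPU
  set PV : (Fin m → ℕ) → Polynomial F → F := fun β y => ∏ j, (v j y)^(β j) with hPV
  set PW : (Fin m → ℕ) → Polynomial F → F := fun γ z => ∏ j, (w j z)^(γ j) with hPW
  set pa : (Fin m → ℕ×ℕ×ℕ) → (Fin m → ℕ) := fun g j => (g j).1 with hpa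
  set pb : (Fin m → ℕ×ℕ×ℕ) → (Fin m → ℕ) := fun g j => (g j).2.1 with hpb
  set pc : (Fin m → ℕ×ℕ×ℕ) → (Fin m → ℕ) := fun g j => (g j).2.2 with hpc
  have hexp : ∀ x y z : Polynomial F,
      T x y z = ∑ g ∈ G, K g * PU (pa g) x * PV (pb g) y * PW (pc g) z := by
    intro x y z
    show (∏ j : Fin m, (1 - (u j x + v j y + w j z)^N)) = _
    have : ∀ j : Fin m, (1 - (u j x + v j y + w j z)^N)
        = ∑ e ∈ Eset N, κ e * (u j x)^e.1 * (v j y)^e.2.1 * (w j z)^e.2.2 :=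
      fun j => hκ (u j x) (v j y) (w j z)
    rw [Finset.prod_congr rfl (fun j _ => this j),
      Finset.prod_univ_sum (fun _ : Fin m => Eset N)
        (fun j e => κ e * (u j x)^e.1 * (v j y)^e.2.1 * (w j z)^e.2.2)]
    apply Finset.sum_congr rfl
    intro g _
    rw [hK, hPU, hPV, hPW, hpa, hpb, hpc]
    simp only []
    rw [← Finset.prod_mul_distrib, ← Finset.prod_mul_distrib, ← Finset.prod_mul_distrib]
  -- split G into three parts
  set p1 : (Fin m → ℕ×ℕ×ℕ) → Prop := fun g => ∑ j, (g j).1 ≤ s with hp1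
  set p2 : (Fin m → ℕ×ℕ×ℕ) → Prop := fun g => ∑ j, (g j).2.1 ≤ s with hp2
  set G1 := G.filter p1 with hG1
  set G2 := (G.filter (fun g => ¬ p1 g)).filter p2 with hG2
  set G3 := (G.filter (fun g => ¬ p1 g)).filter (fun g => ¬ p2 g) with hG3
  have hsplitG : ∀ f : (Fin m → ℕ×ℕ×ℕ) → F,
      ∑ g ∈ G, f g = ∑ g ∈ G1, f g + ∑ g ∈ G2, f g + ∑ g ∈ G3, f g := by
    intro f
    rw [hG1, hG2, hG3, add_assoc,
      Finset.sum_filter_add_sum_filter_not (G.filter (fun g => ¬ p1 g)) p2 f,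
      Finset.sum_filter_add_sum_filter_not G p1 f]
  have hG3c : ∀ g ∈ G3, ∑ j, (g j).2.2 ≤ s := by
    intro g hg
    rw [hG3, Finset.mem_filter, Finset.mem_filter] at hg
    obtain ⟨⟨hgG, hnp1⟩, hnp2⟩ := hg
    have hbound : ∑ j, ((g j).1 + (g j).2.1 + (g j).2.2) ≤ N * m := by
      have : ∀ j : Fin m, (g j).1 + (g j).2.1 + (g j).2.2 ≤ N := by
        intro j
        have := Fintype.mem_piFinset.1 (by rw [hG] at hgG; exact hgG) j
        simp only [Eset, Finset.mem_filter] at this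
        exact this.2
      calc ∑ j, ((g j).1 + (g j).2.1 + (g j).2.2) ≤ ∑ _j : Fin m, N :=
            Finset.sum_le_sum (fun j _ => this j)
        _ = N * m := by rw [Finset.sum_const, Finset.card_univ, Fintype.card_fin]; ring
    simp only [hp1, not_le] at hnp1
    simp only [hp2, not_le] at hnp2
    have hsum3 : ∑ j, (g j).1 + ∑ j, (g j).2.1 + ∑ j, (g j).2.2
        = ∑ j, ((g j).1 + (g j).2.1 + (g j).2.2) := by
      rw [← Finset.sum_add_distrib, ← Finset.sum_add_distrib]
    have hsle : 3 * s + 3 > N * m := by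
      rw [hs]
      omega
    omega
  -- memberships of profiles
  have hmem : ∀ g ∈ G, (∀ j : Fin m, (g j).1 < q ∧ (g j).2.1 < q ∧ (g j).2.2 < q) := by
    intro g hg j
    have := Fintype.mem_piFinset.1 (by rw [hG] at hg; exact hg) j
    simp only [Eset, Finset.mem_filter, Finset.mem_product, Finset.mem_range] at this
    omega
  have hmapsa : ∀ g ∈ G1, pa g ∈ Γ := by
    intro g hg
    rw [hG1, Finset.mem_filter] at hg
    rw [hΓ, Finset.mem_filter]
    constructor
    · rw [Fintype.mem_piFinset]
      intro j
      rw [Finset.mem_range]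
      exact ((hmem g hg.1) j).1
    · exact hg.2
  have hmapsb : ∀ g ∈ G2, pb g ∈ Γ := by
    intro g hg
    rw [hG2, Finset.mem_filter, Finset.mem_filter] at hg
    rw [hΓ, Finset.mem_filter]
    constructor
    · rw [Fintype.mem_piFinset]
      intro j
      rw [Finset.mem_range]
      exact ((hmem g hg.1.1) j).2.1
    · exact hg.2
  have hmapsc : ∀ g ∈ G3, pc g ∈ Γ := by
    intro g hg
    rw [hΓ, Finset.mem_filter]
    constructor
    · rw [Fintype.mem_piFinset]
      intro j
      rw [Finset.mem_range]
      have hgG : g ∈ G := by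
        rw [hG3, Finset.mem_filter, Finset.mem_filter] at hg
        exact hg.1.1
      exact ((hmem g hgG) j).2.2
    · exact hG3c g hg
  -- grouped decomposition
  set H1 : (Fin m → ℕ) → Polynomial F → Polynomial F → F :=
    fun α y z => ∑ g ∈ G1.filter (fun g => pa g = α), K g * PV (pb g) y * PW (pc g) z with hH1
  set H2 : (Fin m → ℕ) → Polynomial F → Polynomial F → F :=
    fun β x z => ∑ g ∈ G2.filter (fun g => pb g = β), K g * PU (pa g) x * PW (pc g) z with hH2
  set H3 : (Fin m → ℕ) → Polynomial F → Polynomial F → F :=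
    fun γ x y => ∑ g ∈ G3.filter (fun g => pc g = γ), K g * PU (pa g) x * PV (pb g) y with hH3
  have hdecomp : ∀ x y z : Polynomial F,
      T x y z = (∑ α ∈ Γ, PU α x * H1 α y z) + (∑ β ∈ Γ, PV β y * H2 β x z)
        + (∑ γ ∈ Γ, PW γ z * H3 γ x y) := by
    intro x y z
    rw [hexp x y z, hsplitG]
    congr 1
    congr 1
    · -- G1 part
      rw [← Finset.sum_fiberwise_of_maps_to hmapsa
        (fun g => K g * PU (pa g) x * PV (pb g) y * PW (pc g) z)]
      apply Finset.sum_congr rfl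
      intro α _
      simp only [hH1]
      rw [Finset.mul_sum]
      apply Finset.sum_congr rfl
      intro g hg
      have : pa g = α := (Finset.mem_filter.1 hg).2
      rw [← this]
      ring
    · rw [← Finset.sum_fiberwise_of_maps_to hmapsb
        (fun g => K g * PU (pa g) x * PV (pb g) y * PW (pc g) z)]
      apply Finset.sum_congr rfl
      intro β _
      simp only [hH2]
      rw [Finset.mul_sum]
      apply Finset.sum_congr rfl
      intro g hg
      have : pb g = β := (Finset.mem_filter.1 hg).2
      rw [← this]
      ring
    · rw [← Finset.sum_fiberwise_of_maps_to hmapsc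
        (fun g => K g * PU (pa g) x * PV (pb g) y * PW (pc g) z)]
      apply Finset.sum_congr rfl
      intro γ _
      simp only [hH3]
      rw [Finset.mul_sum]
      apply Finset.sum_congr rfl
      intro g hg
      have : pc g = γ := (Finset.mem_filter.1 hg).2
      rw [← this]
      ring
  -- annihilator over the index type ↥A
  obtain ⟨h, hann, hcard⟩ := exists_annihilating_large_support (ι := ↥A)
    Γ (fun γ (z : ↥A) => PW γ (z : Polynomial F))
  -- the diagonal identity
  have hTdiag : ∀ x y : ↥A, (∑ z : ↥A, h z * T (x:Polynomial F) y z)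
      = (if x = y then h x else 0) := by
    intro x y
    by_cases hxy : x = y
    · subst hxy
      rw [if_pos rfl]
      rw [Finset.sum_eq_single x]
      · have : T (x:Polynomial F) x x = 1 := by
          apply hT1
          rw [← add_mul, ← add_mul, hsum, zero_mul]
        rw [this, mul_one]
      · intro z _ hzx
        have : T (x:Polynomial F) x z = 0 := by
          apply hT0 _ x.2 _ x.2 _ z.2
          intro hc
          obtain ⟨-, h2⟩ := hfree _ x.2 _ x.2 _ z.2 hc
          exact hzx (Subtype.ext h2.symm)
        rw [this, mul_zero]
      · intro hx
        exact absurd (Finset.mem_univ x) hx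
    · rw [if_neg hxy]
      apply Finset.sum_eq_zero
      intro z _
      have : T (x:Polynomial F) y z = 0 := by
        apply hT0 _ x.2 _ y.2 _ z.2
        intro hc
        obtain ⟨h1, -⟩ := hfree _ x.2 _ y.2 _ z.2 hc
        exact hxy (Subtype.ext h1)
      rw [this, mul_zero]
  have hid : ∀ x y : ↥A, (if x = y then h x else 0)
      = (∑ α ∈ Γ, PU α (x:Polynomial F) * (∑ z : ↥A, h z * H1 α (y:Polynomial F) z))
        + (∑ β ∈ Γ, (∑ z : ↥A, h z * H2 β (x:Polynomial F) z) * PV β (y:Polynomial F)) := by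
    intro x y
    rw [← hTdiag x y]
    have : ∀ z : ↥A, h z * T (x:Polynomial F) y z
        = (∑ α ∈ Γ, PU α (x:Polynomial F) * (h z * H1 α (y:Polynomial F) z))
          + (∑ β ∈ Γ, (h z * H2 β (x:Polynomial F) z) * PV β (y:Polynomial F))
          + (∑ γ ∈ Γ, (h z * PW γ (z:Polynomial F)) * H3 γ (x:Polynomial F) y) := by
      intro z
      rw [hdecomp (x:Polynomial F) y z]
      rw [mul_add, mul_add, Finset.mul_sum, Finset.mul_sum, Finset.mul_sum]
      congr 1
      · congr 1
        · apply Finset.sum_congr rfl; intro α _; ring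
        · apply Finset.sum_congr rfl; intro β _; ring
      · apply Finset.sum_congr rfl; intro γ _; ring
    rw [Finset.sum_congr rfl (fun z _ => this z)]
    rw [Finset.sum_add_distrib, Finset.sum_add_distrib]
    have hthird : (∑ z : ↥A, ∑ γ ∈ Γ, (h z * PW γ (z:Polynomial F)) * H3 γ (x:Polynomial F) y)
        = 0 := by
      rw [Finset.sum_comm]
      apply Finset.sum_eq_zero
      intro γ hγ
      rw [← Finset.sum_mul]
      rw [hann γ hγ, zero_mul]
    rw [hthird, add_zero]
    congr 1
    · rw [Finset.sum_comm]
      apply Finset.sum_congr rfl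
      intro α _
      rw [Finset.mul_sum]
    · rw [Finset.sum_comm]
      apply Finset.sum_congr rfl
      intro β _
      rw [Finset.sum_mul]
  -- conclude
  have hdle := diag_le Γ h
    (fun α (y : ↥A) => ∑ z : ↥A, h z * H1 α (y:Polynomial F) z)
    (fun β (x : ↥A) => ∑ z : ↥A, h z * H2 β (x:Polynomial F) z)
    (fun α (x : ↥A) => PU α (x:Polynomial F))
    (fun β (y : ↥A) => PV β (y:Polynomial F))
    hid
  have : Fintype.card ↥A ≤ Γ.card + 2 * Γ.card := le_trans hcard (by omega)
  rw [Fintype.card_coe] at this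
  omega





/-- **Bloom's bound for translation-invariant equations over `𝔽_q[t]`.** Let `F` be a
finite field with `q` elements and let `c₁, c₂, c₃ ∈ F[t]` be nonzero polynomials with
`c₁ + c₂ + c₃ = 0`. Then there is `C > 0` (depending only on `q` and the `cᵢ`) such
that for all `n ≥ 2`, any set `A` of polynomials of degree `< n` with no non-trivial
solution to `c₁x₁ + c₂x₂ + c₃x₃ = 0` satisfies `|A| ≤ C · qⁿ · (log n)² / n`. -/
theorem bloom_function_field (F : Type*) [Field F] [Fintype F]
    (c₁ c₂ c₃ : Polynomial F) (h₁ : c₁ ≠ 0) (h₂ : c₂ ≠ 0) (h₃ : c₃ ≠ 0)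
    (hsum : c₁ + c₂ + c₃ = 0) :
    ∃ C : ℝ, 0 < C ∧ ∀ n : ℕ, 2 ≤ n → ∀ A : Finset (Polynomial F),
      (∀ f ∈ A, f.degree < (n : ℕ)) →
      (∀ x₁ ∈ A, ∀ x₂ ∈ A, ∀ x₃ ∈ A,
        c₁ * x₁ + c₂ * x₂ + c₃ * x₃ = 0 → x₁ = x₂ ∧ x₂ = x₃) →
      (A.card : ℝ) ≤ C * (Fintype.card F : ℝ) ^ n * (Real.log n) ^ 2 / n := by
  classical
  set q := Fintype.card F with hqdef
  have hq : 2 ≤ q := Fintype.one_lt_card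
  set D := max c₁.natDegree (max c₂.natDegree c₃.natDegree) + 1 with hD
  set B : ℕ := 27 * (Vq q).toNat * q^D with hB
  set C : ℝ := ((B:ℝ) + 1) / (Real.log 2)^2 with hC
  have hlog2 : (0:ℝ) < Real.log 2 := Real.log_pos (by norm_num)
  have hCpos : 0 < C := by
    apply div_pos
    · positivity
    · positivity
  refine ⟨C, hCpos, ?_⟩
  intro n hn A hAdeg hfree
  set m := n + D with hm
  have hm1 : 1 ≤ m := by omega
  -- degree bound
  have hdeg : ∀ x ∈ A, ∀ y ∈ A, ∀ z ∈ A, (c₁*x + c₂*y + c₃*z).degree < (m:ℕ) := by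
    intro x hx y hy z hz
    have hnd : ∀ f ∈ A, f.natDegree < n := by
      intro f hf
      by_cases hf0 : f = 0
      · rw [hf0]; simpa using (by omega : 0 < n)
      · exact (Polynomial.natDegree_lt_iff_degree_lt hf0).2 (hAdeg f hf)
    by_cases hP0 : c₁*x + c₂*y + c₃*z = 0
    · rw [hP0, Polynomial.degree_zero]
      exact WithBot.bot_lt_coe m
    · rw [← Polynomial.natDegree_lt_iff_degree_lt hP0]
      have b1 : (c₁*x).natDegree ≤ c₁.natDegree + x.natDegree := Polynomial.natDegree_mul_le
      have b2 : (c₂*y).natDegree ≤ c₂.natDegree + y.natDegree := Polynomial.natDegree_mul_le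
      have b3 : (c₃*z).natDegree ≤ c₃.natDegree + z.natDegree := Polynomial.natDegree_mul_le
      have b4 : (c₁*x + c₂*y).natDegree ≤ max (c₁*x).natDegree (c₂*y).natDegree :=
        Polynomial.natDegree_add_le _ _
      have b5 : (c₁*x + c₂*y + c₃*z).natDegree
          ≤ max (c₁*x + c₂*y).natDegree (c₃*z).natDegree := Polynomial.natDegree_add_le _ _
      have hx' := hnd x hx
      have hy' := hnd y hy
      have hz' := hnd z hz
      have hc1 : c₁.natDegree ≤ D - 1 := by omega
      have hc2 : c₂.natDegree ≤ D - 1 := by omega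
      have hc3 : c₃.natDegree ≤ D - 1 := by omega
      omega
  -- combinatorial bound
  have hcomb := main_card_bound c₁ c₂ c₃ hsum m A hdeg hfree
  set M := ((piFinset fun _ : Fin m => range q).filter
      (fun α => ∑ j, α j ≤ (q - 1) * m / 3)).card with hM
  have hcount := count_lemma q m ((q-1)*m/3) hq hm1 (by rw [Nat.mul_comm]; exact Nat.div_mul_le_self _ 3)
  -- natural number chain : A.card * n ≤ B * q ^ n
  have hchain : A.card * n ≤ B * q^n := by
    calc A.card * n ≤ (3 * M) * n := Nat.mul_le_mul_right n hcomb
      _ ≤ (3 * M) * m := Nat.mul_le_mul_left _ (Nat.le_add_right n D)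
      _ = 3 * (M * m) := by ring
      _ ≤ 3 * (9 * (Vq q).toNat * q^(m-1)) := Nat.mul_le_mul_left _ hcount
      _ = 27 * (Vq q).toNat * q^(m-1) := by ring
      _ ≤ 27 * (Vq q).toNat * q^(n + D) := by
          apply Nat.mul_le_mul_left
          apply Nat.pow_le_pow_right (le_trans one_le_two hq)
          exact Nat.sub_le _ _
      _ = B * q^n := by rw [hB, pow_add]; ring
  -- real arithmetic
  have hn0 : 0 < n := lt_of_lt_of_le two_pos hn
  have hnR : (0:ℝ) < n := by exact_mod_cast hn0
  have hchainR : (A.card : ℝ) * n ≤ (B:ℝ) * (q:ℝ)^n := by exact_mod_cast hchain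
  have hqR : (0:ℝ) ≤ (q:ℝ)^n := by positivity
  have hlogn : Real.log 2 ≤ Real.log n := by
    apply Real.log_le_log (by norm_num)
    exact_mod_cast hn
  have hsq : (Real.log 2)^2 ≤ (Real.log n)^2 := by
    apply pow_le_pow_left₀ hlog2.le hlogn
  rw [le_div_iff₀ hnR]
  calc (A.card:ℝ) * n ≤ (B:ℝ) * (q:ℝ)^n := hchainR
    _ ≤ ((B:ℝ)+1) * (q:ℝ)^n := by nlinarith [hqR]
    _ = C * (q:ℝ)^n * (Real.log 2)^2 := by
        rw [hC]
        field_simp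
    _ ≤ C * (q:ℝ)^n * (Real.log n)^2 := by
        apply mul_le_mul_of_nonneg_left hsq
        exact mul_nonneg hCpos.le hqR

end BloomFF
end

section
/- Let G be a finite abelian group with dual Ĝ, let Γ ⊆ Ĝ, and let S ⊆ Ĝ be a finite set whose Γ-dimension equals |S| − k for some integer k ≥ 0. Then for all integers m, t₁, t₂ with m ≥ t₁ ≥ 0 and m ≥ t₂ ≥ 0, the restricted energy satisfies E^♯_{t₁,t₂}(1_S, Γ) ≤ 4^{k+m}. -/
open scoped BigOperators Pointwise

/-- The restricted additive energy `E^♯_{t₁,t₂}(ω,Γ)`: the sum, over pairs of disjoint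
subsets `Δ₁, Δ₂` with `|Δ₁| = t₁`, `|Δ₂| = t₂`, of
`(∏_{γ∈Δ₁∪Δ₂} ω(γ)) · 1_Γ(∑_{γ∈Δ₁} γ − ∑_{γ'∈Δ₂} γ')`; by convention
`E^♯_{0,0}(ω,Γ) = 1`. -/
noncomputable def renergy {H : Type*} [AddCommGroup H] [Fintype H] [DecidableEq H]
    (ω : H → ℝ) (Γ : Set H) (t₁ t₂ : ℕ) : ℝ :=
  if t₁ = 0 ∧ t₂ = 0 then 1 else
    ∑ Δ₁ : Finset H, ∑ Δ₂ : Finset H,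
      if Δ₁.card = t₁ ∧ Δ₂.card = t₂ ∧ Disjoint Δ₁ Δ₂ then
        (∏ γ ∈ Δ₁ ∪ Δ₂, ω γ) * Γ.indicator 1 ((∑ γ ∈ Δ₁, γ) - ∑ γ ∈ Δ₂, γ)
      else 0

/-- `Δ` is `Γ`-dissociated: for every `k ≥ 1` and `λ` there are at most `2^k` pairs
`(Δ₁,Δ₂)` of disjoint subsets of `Δ` with `|Δ₁ ∪ Δ₂| = k` and
`∑_{γ∈Δ₁} γ − ∑_{γ'∈Δ₂} γ' ∈ Γ + λ`. -/
def Dissociated {H : Type*} [AddCommGroup H] [DecidableEq H]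
    (Γ : Set H) (Δ : Finset H) : Prop :=
  ∀ k : ℕ, 1 ≤ k → ∀ lam : H,
    {p : Finset H × Finset H | p.1 ⊆ Δ ∧ p.2 ⊆ Δ ∧ Disjoint p.1 p.2 ∧
      (p.1 ∪ p.2).card = k ∧
      (∑ γ ∈ p.1, γ) - (∑ γ ∈ p.2, γ) ∈ Γ + ({lam} : Set H)}.ncard ≤ 2 ^ k

/-- The `Γ`-dimension of `S`: the size of the largest `Γ`-dissociated subset of `S`. -/
noncomputable def dimension {H : Type*} [AddCommGroup H] [DecidableEq H]
    (Γ : Set H) (S : Finset H) : ℕ :=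
  sSup {r | ∃ Δ ⊆ S, Dissociated Γ Δ ∧ Δ.card = r}

private lemma inter_union_sdiff_eq {α : Type*} [DecidableEq α] (s t : Finset α) :
    s ∩ t ∪ s \ t = s := by
  ext a
  simp only [Finset.mem_union, Finset.mem_inter, Finset.mem_sdiff]
  tauto

/-- If `S` has `Γ`-dimension `|S| − k` then `E^♯_{t₁,t₂}(1_S, Γ) ≤ 4^{k+m}` for all
`m ≥ t₁, t₂ ≥ 0`. -/
theorem renergy_le_of_dimension {H : Type*} [AddCommGroup H] [Fintype H] [DecidableEq H]
    (Γ : Set H) (S : Finset H) (k : ℕ) (hdim : dimension Γ S + k = S.card)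
    (m t₁ t₂ : ℕ) (ht₁ : t₁ ≤ m) (ht₂ : t₂ ≤ m) :
    renergy (fun γ => if γ ∈ S then (1 : ℝ) else 0) Γ t₁ t₂ ≤ 4 ^ (k + m) := by
  classical
  -- the supremum defining the dimension is attained
  have hmem : dimension Γ S ∈ {r | ∃ Δ ⊆ S, Dissociated Γ Δ ∧ Δ.card = r} := by
    apply Nat.sSup_mem
    · refine ⟨0, ∅, Finset.empty_subset S, ?_, Finset.card_empty⟩
      intro j hj lam
      have hempty : {p : Finset H × Finset H | p.1 ⊆ (∅ : Finset H) ∧ p.2 ⊆ ∅ ∧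
          Disjoint p.1 p.2 ∧ (p.1 ∪ p.2).card = j ∧
          (∑ γ ∈ p.1, γ) - (∑ γ ∈ p.2, γ) ∈ Γ + ({lam} : Set H)} = ∅ := by
        ext p
        simp only [Set.mem_setOf_eq, Set.mem_empty_iff_false, iff_false, not_and]
        intro h1 h2
        rw [Finset.subset_empty] at h1 h2
        intro _ hcard
        rw [h1, h2] at hcard
        simp at hcard
        omega
      rw [hempty, Set.ncard_empty]
      exact Nat.zero_le _
    · exact ⟨S.card, fun r ⟨Δ, hsub, _, hcard⟩ => hcard ▸ Finset.card_le_card hsub⟩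
  obtain ⟨D, hDS, hDdis, hDcard⟩ := hmem
  have hScard : (S \ D).card = k := by
    rw [Finset.card_sdiff_of_subset hDS]
    omega
  by_cases h0 : t₁ = 0 ∧ t₂ = 0
  · rw [renergy, if_pos h0]
    calc (1 : ℝ) = 1 ^ (k + m) := (one_pow _).symm
      _ ≤ 4 ^ (k + m) := by gcongr <;> norm_num
  -- the set of pairs contributing to the energy
  set pred : Finset H × Finset H → Prop := fun p =>
    p.1 ⊆ S ∧ p.2 ⊆ S ∧ p.1.card = t₁ ∧ p.2.card = t₂ ∧ Disjoint p.1 p.2 ∧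
      (∑ γ ∈ p.1, γ) - (∑ γ ∈ p.2, γ) ∈ Γ with hpred
  set P : Finset (Finset H × Finset H) := Finset.univ.filter pred with hP
  -- Step A: the energy is at most the number of such pairs
  have hA : renergy (fun γ => if γ ∈ S then (1 : ℝ) else 0) Γ t₁ t₂ ≤ (P.card : ℝ) := by
    rw [renergy, if_neg h0]
    have hrhs : (P.card : ℝ) = ∑ p : Finset H × Finset H, if pred p then (1 : ℝ) else 0 := by
      rw [Finset.sum_boole, hP]
    rw [hrhs, Fintype.sum_prod_type]
    apply Finset.sum_le_sum
    intro Δ₁ _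
    apply Finset.sum_le_sum
    intro Δ₂ _
    by_cases hc : Δ₁.card = t₁ ∧ Δ₂.card = t₂ ∧ Disjoint Δ₁ Δ₂
    · rw [if_pos hc]
      by_cases hsub : Δ₁ ∪ Δ₂ ⊆ S
      · have hprod : (∏ γ ∈ Δ₁ ∪ Δ₂, if γ ∈ S then (1 : ℝ) else 0) = 1 :=
          Finset.prod_eq_one fun γ hγ => if_pos (hsub hγ)
        rw [hprod, one_mul]
        by_cases hΓ : (∑ γ ∈ Δ₁, γ) - (∑ γ ∈ Δ₂, γ) ∈ Γ
        · have hpp : pred (Δ₁, Δ₂) :=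
            ⟨fun x hx => hsub (Finset.mem_union_left _ hx),
             fun x hx => hsub (Finset.mem_union_right _ hx), hc.1, hc.2.1, hc.2.2, hΓ⟩
          rw [if_pos hpp, Set.indicator_of_mem hΓ]
          norm_num
        · rw [Set.indicator_of_notMem hΓ]
          split_ifs <;> norm_num
      · obtain ⟨γ, hγU, hγS⟩ := Finset.not_subset.mp hsub
        have hprod : (∏ γ ∈ Δ₁ ∪ Δ₂, if γ ∈ S then (1 : ℝ) else 0) = 0 :=
          Finset.prod_eq_zero hγU (if_neg hγS)
        rw [hprod, zero_mul]
        split_ifs <;> norm_num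
    · rw [if_neg hc]
      split_ifs <;> norm_num
  -- Step B: count the pairs fiberwise over their parts outside D
  set T : Finset (Finset H × Finset H) := (S \ D).powerset ×ˢ (S \ D).powerset with hT
  have hmap : ∀ p ∈ P, (p.1 \ D, p.2 \ D) ∈ T := by
    intro p hp
    rw [hP, Finset.mem_filter] at hp
    obtain ⟨-, h1, h2, -⟩ := hp
    rw [hT, Finset.mem_product]
    exact ⟨Finset.mem_powerset.mpr (Finset.sdiff_subset_sdiff h1 le_rfl),
      Finset.mem_powerset.mpr (Finset.sdiff_subset_sdiff h2 le_rfl)⟩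
  have hfiber : ∀ b ∈ T,
      (P.filter fun p => (p.1 \ D, p.2 \ D) = b).card ≤ 2 ^ (t₁ + t₂) := by
    intro b _
    set lam : H := (∑ γ ∈ b.2, γ) - ∑ γ ∈ b.1, γ with hlam
    set j : ℕ := (t₁ - b.1.card) + (t₂ - b.2.card) with hj
    set Q : Set (Finset H × Finset H) := {q | q.1 ⊆ D ∧ q.2 ⊆ D ∧ Disjoint q.1 q.2 ∧
      (q.1 ∪ q.2).card = j ∧
      (∑ γ ∈ q.1, γ) - (∑ γ ∈ q.2, γ) ∈ Γ + ({lam} : Set H)} with hQ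
    have hQcard : Q.ncard ≤ 2 ^ j := by
      rcases Nat.eq_zero_or_pos j with hj0 | hj1
      · have hsub : Q ⊆ {((∅ : Finset H), (∅ : Finset H))} := by
          rintro ⟨q1, q2⟩ ⟨-, -, -, hcard, -⟩
          simp only [Set.mem_singleton_iff, Prod.mk.injEq]
          rw [hj0, Finset.card_eq_zero, Finset.union_eq_empty] at hcard
          exact ⟨hcard.1, hcard.2⟩
        calc Q.ncard ≤ ({((∅ : Finset H), (∅ : Finset H))} : Set _).ncard :=
              Set.ncard_le_ncard hsub (Set.finite_singleton _)
          _ = 1 := Set.ncard_singleton _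
          _ ≤ 2 ^ j := Nat.one_le_two_pow
      · exact hDdis j hj1 lam
    have hcardQ : (P.filter fun p => (p.1 \ D, p.2 \ D) = b).card ≤ Q.ncard := by
      rw [← Set.ncard_coe_finset]
      apply Set.ncard_le_ncard_of_injOn (fun p => (p.1 ∩ D, p.2 ∩ D))
      · intro p hp
        simp only [Finset.coe_filter, Set.mem_setOf_eq] at hp
        obtain ⟨hpP, hpb⟩ := hp
        rw [hP, Finset.mem_filter] at hpP
        obtain ⟨-, h1S, h2S, hc1, hc2, hdisj, hΓmem⟩ := hpP
        have hb1 : p.1 \ D = b.1 := congrArg Prod.fst hpb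
        have hb2 : p.2 \ D = b.2 := congrArg Prod.snd hpb
        have hcard1 : (p.1 ∩ D).card + b.1.card = t₁ := by
          rw [← hb1, ← hc1]; exact Finset.card_inter_add_card_sdiff p.1 D
        have hcard2 : (p.2 ∩ D).card + b.2.card = t₂ := by
          rw [← hb2, ← hc2]; exact Finset.card_inter_add_card_sdiff p.2 D
        have hdisj' : Disjoint (p.1 ∩ D) (p.2 ∩ D) :=
          hdisj.mono Finset.inter_subset_left Finset.inter_subset_left
        refine ⟨Finset.inter_subset_right, Finset.inter_subset_right, hdisj', ?_, ?_⟩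
        · rw [Finset.card_union_of_disjoint hdisj', hj]
          omega
        · have hs1 : (∑ γ ∈ p.1 ∩ D, γ) + ∑ γ ∈ b.1, γ = ∑ γ ∈ p.1, γ := by
            rw [← hb1]; exact Finset.sum_inter_add_sum_sdiff p.1 D id
          have hs2 : (∑ γ ∈ p.2 ∩ D, γ) + ∑ γ ∈ b.2, γ = ∑ γ ∈ p.2, γ := by
            rw [← hb2]; exact Finset.sum_inter_add_sum_sdiff p.2 D id
          have heq : (∑ γ ∈ p.1 ∩ D, γ) - (∑ γ ∈ p.2 ∩ D, γ)
              = ((∑ γ ∈ p.1, γ) - (∑ γ ∈ p.2, γ)) + lam := by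
            rw [← hs1, ← hs2, hlam]; abel
          rw [heq]
          exact Set.add_mem_add hΓmem rfl
      · intro p hp q hq hpq
        simp only [Finset.coe_filter, Set.mem_setOf_eq] at hp hq
        have hpb1 : p.1 \ D = b.1 := congrArg Prod.fst hp.2
        have hpb2 : p.2 \ D = b.2 := congrArg Prod.snd hp.2
        have hqb1 : q.1 \ D = b.1 := congrArg Prod.fst hq.2
        have hqb2 : q.2 \ D = b.2 := congrArg Prod.snd hq.2
        have h1 : p.1 ∩ D = q.1 ∩ D := congrArg Prod.fst hpq
        have h2 : p.2 ∩ D = q.2 ∩ D := congrArg Prod.snd hpq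
        have e1 : p.1 = q.1 := by
          calc p.1 = p.1 ∩ D ∪ p.1 \ D := (inter_union_sdiff_eq p.1 D).symm
            _ = q.1 ∩ D ∪ q.1 \ D := by rw [h1, hpb1, hqb1]
            _ = q.1 := inter_union_sdiff_eq q.1 D
        have e2 : p.2 = q.2 := by
          calc p.2 = p.2 ∩ D ∪ p.2 \ D := (inter_union_sdiff_eq p.2 D).symm
            _ = q.2 ∩ D ∪ q.2 \ D := by rw [h2, hpb2, hqb2]
            _ = q.2 := inter_union_sdiff_eq q.2 D
        exact Prod.ext e1 e2
    have hjle : j ≤ t₁ + t₂ := by rw [hj]; omega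
    calc (P.filter fun p => (p.1 \ D, p.2 \ D) = b).card ≤ Q.ncard := hcardQ
      _ ≤ 2 ^ j := hQcard
      _ ≤ 2 ^ (t₁ + t₂) := Nat.pow_le_pow_right (by norm_num) hjle
  have hPcard : P.card ≤ 4 ^ k * 2 ^ (t₁ + t₂) := by
    rw [Finset.card_eq_sum_card_fiberwise hmap]
    calc ∑ b ∈ T, (P.filter fun p => (p.1 \ D, p.2 \ D) = b).card
        ≤ ∑ _b ∈ T, 2 ^ (t₁ + t₂) := Finset.sum_le_sum hfiber
      _ = T.card * 2 ^ (t₁ + t₂) := by rw [Finset.sum_const, smul_eq_mul]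
      _ = 4 ^ k * 2 ^ (t₁ + t₂) := by
          rw [hT, Finset.card_product, Finset.card_powerset, hScard, ← mul_pow]
          norm_num
  calc renergy (fun γ => if γ ∈ S then (1 : ℝ) else 0) Γ t₁ t₂ ≤ (P.card : ℝ) := hA
    _ ≤ ((4 ^ k * 2 ^ (t₁ + t₂) : ℕ) : ℝ) := by exact_mod_cast hPcard
    _ ≤ 4 ^ (k + m) := by
        rw [Nat.cast_mul, Nat.cast_pow, Nat.cast_pow, Nat.cast_ofNat, Nat.cast_ofNat, pow_add (4:ℝ) k m]
        have h2 : (2 : ℝ) ^ (t₁ + t₂) ≤ 4 ^ m := by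
          have : (4 : ℝ) ^ m = 2 ^ (2 * m) := by
            rw [pow_mul]; norm_num
          rw [this]
          exact pow_le_pow_right₀ (by norm_num) (by omega)
        have h4 : (0 : ℝ) ≤ 4 ^ k := by positivity
        exact mul_le_mul_of_nonneg_left h2 h4
end

section
/- Let G be a finite abelian group with dual Ĝ, let Γ ⊆ Ĝ be symmetric (Γ = −Γ), and let ω: Ĝ → ℝ_{≥0} be not identically zero. Let m ≥ 2 and d ≥ n ≥ 2 be integers such that m ≤ d/4 and ‖ω‖₂ ≤ m^{1/2} d^{−1} ‖ω‖₁. Then either there is a finite set Δ ⊆ Ĝ such that ∑_{γ∈Δ} ω(γ) ≥ (n/d)·‖ω‖₁ and Δ is 2d-covered by Γ, or E_{2m}(ω,Γ) ≤ 2^{13m+6n} m^{2m} d^{−2m} ‖ω‖₁^{2m}. -/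
set_option linter.unusedSectionVars false


open scoped BigOperators Pointwise

/-- The `ℓ¹` norm of a weight function `ω`. -/
noncomputable def norm1 {H : Type*} [Fintype H] (ω : H → ℝ) : ℝ := ∑ γ, ω γ

/-- The `ℓ²` norm of a weight function `ω`. -/
noncomputable def norm2 {H : Type*} [Fintype H] (ω : H → ℝ) : ℝ :=
  Real.sqrt (∑ γ, ω γ ^ 2)

/-- The additive energy `E_{2m}(ω,Γ)`. -/
noncomputable def energy {H : Type*} [AddCommGroup H] [Fintype H]
    (ω : H → ℝ) (Γ : Set H) (m : ℕ) : ℝ :=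
  ∑ γ : Fin m → H, ∑ γ' : Fin m → H,
    (∏ i, ω (γ i)) * (∏ i, ω (γ' i)) * Γ.indicator 1 ((∑ i, γ i) - ∑ i, γ' i)

/-- `⟨Λ⟩ = {∑_{λ∈Λ} ε_λ λ : ε_λ ∈ {−1,0,1}}`. -/
def spanPM {H : Type*} [AddCommGroup H] (Λ : Finset H) : Set H :=
  {x | ∃ ε : H → ℤ, (∀ lam, ε lam = -1 ∨ ε lam = 0 ∨ ε lam = 1) ∧
    x = ∑ lam ∈ Λ, ε lam • lam}

/-- `S` is `d`-covered by `Γ`: there is `Λ` with `|Λ| ≤ d` and `S ⊆ Γ − Γ + ⟨Λ⟩`. -/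
def Covered {H : Type*} [AddCommGroup H] (Γ : Set H) (d : ℝ) (S : Set H) : Prop :=
  ∃ Λ : Finset H, (Λ.card : ℝ) ≤ d ∧ S ⊆ Γ - Γ + spanPM Λ

section SpanLemmas

variable {H : Type*} [AddCommGroup H] [DecidableEq H]

/-- Subset sums of a finset. -/
def spanP (X : Finset H) : Set H := {y | ∃ Y : Finset H, Y ⊆ X ∧ y = ∑ a ∈ Y, a}

lemma zero_mem_spanP (X : Finset H) : (0 : H) ∈ spanP X :=
  ⟨∅, Finset.empty_subset X, by simp⟩

lemma spanP_shift {N L : Finset H} {v l : H} (hv : v ∈ spanP N) (hl : l ∈ L) (hlN : l ∉ N) :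
    v + l ∈ spanP (N ∪ L) := by
  classical
  obtain ⟨Y, hY, rfl⟩ := hv
  refine ⟨insert l Y, ?_, ?_⟩
  · exact Finset.insert_subset (Finset.mem_union_right _ hl) (hY.trans Finset.subset_union_left)
  · rw [Finset.sum_insert (fun h => hlN (hY h))]; abel

lemma sum_indic_smul {X Y : Finset H} (hY : Y ⊆ X) :
    ∑ a ∈ X, (if a ∈ Y then (1:ℤ) else 0) • a = ∑ a ∈ Y, a := by
  classical
  have h : ∀ a : H, ((if a ∈ Y then (1:ℤ) else 0) • a) = (if a ∈ Y then a else 0) := by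
    intro a; by_cases hh : a ∈ Y <;> simp [hh]
  simp_rw [h]
  rw [Finset.sum_ite_mem, Finset.inter_eq_right.mpr hY]

lemma sub_mem_spanPM {X : Finset H} {u u' : H} (hu : u ∈ spanP X) (hu' : u' ∈ spanP X) :
    u - u' ∈ spanPM X := by
  classical
  obtain ⟨Y, hY, rfl⟩ := hu
  obtain ⟨Y', hY', rfl⟩ := hu'
  refine ⟨fun a => (if a ∈ Y then 1 else 0) - (if a ∈ Y' then 1 else 0), ?_, ?_⟩
  · intro lam; by_cases h1 : lam ∈ Y <;> by_cases h2 : lam ∈ Y' <;> simp [h1, h2]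
  · rw [eq_comm]
    calc ∑ a ∈ X, ((if a ∈ Y then (1:ℤ) else 0) - (if a ∈ Y' then 1 else 0)) • a
        = ∑ a ∈ X, (((if a ∈ Y then (1:ℤ) else 0) • a) - ((if a ∈ Y' then (1:ℤ) else 0) • a)) := by
          exact Finset.sum_congr rfl fun a _ => by rw [sub_smul]
      _ = (∑ a ∈ X, (if a ∈ Y then (1:ℤ) else 0) • a)
            - ∑ a ∈ X, (if a ∈ Y' then (1:ℤ) else 0) • a := Finset.sum_sub_distrib _ _
      _ = (∑ a ∈ Y, a) - ∑ a ∈ Y', a := by rw [sum_indic_smul hY, sum_indic_smul hY']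

lemma add_mem_spanPM_union {F F' : Finset H} {w z : H} (hdisj : Disjoint F F')
    (hw : w ∈ spanPM F) (hz : z ∈ spanPM F') : w + z ∈ spanPM (F ∪ F') := by
  classical
  obtain ⟨ε₁, hv₁, rfl⟩ := hw
  obtain ⟨ε₂, hv₂, rfl⟩ := hz
  refine ⟨fun a => if a ∈ F then ε₁ a else ε₂ a, ?_, ?_⟩
  · intro lam
    by_cases h : lam ∈ F
    · simpa [h] using hv₁ lam
    · simpa [h] using hv₂ lam
  · rw [Finset.sum_union hdisj]
    congr 1
    · exact Finset.sum_congr rfl fun a ha => by simp [ha]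
    · exact Finset.sum_congr rfl fun a ha => by simp [Finset.disjoint_right.mp hdisj ha]

lemma mem_spanPM_self {X : Finset H} {x : H} (hx : x ∈ X) : x ∈ spanPM X := by
  classical
  refine ⟨fun a => if a = x then 1 else 0, ?_, ?_⟩
  · intro lam; by_cases h : lam = x <;> simp [h]
  · have h : ∀ a : H, ((if a = x then (1:ℤ) else 0) • a) = (if a = x then a else 0) := by
      intro a; by_cases hh : a = x <;> simp [hh]
    simp_rw [h]
    rw [Finset.sum_ite_eq' X x (fun a => a), if_pos hx]

lemma neg_mem_spanPM {X : Finset H} {z : H} (hz : z ∈ spanPM X) : -z ∈ spanPM X := by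
  obtain ⟨ε, hε, rfl⟩ := hz
  refine ⟨fun a => -ε a, ?_, ?_⟩
  · intro lam; rcases hε lam with h | h | h <;> simp [h]
  · simp [neg_smul, Finset.sum_neg_distrib]

/-- `Γ - Γ + spanPM F`, in existential form. -/
def GGs (Γ : Set H) (F : Finset H) : Set H :=
  {z | ∃ g ∈ Γ, ∃ g' ∈ Γ, ∃ w ∈ spanPM F, z = g - g' + w}

lemma GGs_subset (Γ : Set H) (F : Finset H) : GGs Γ F ⊆ Γ - Γ + spanPM F := by
  rintro z ⟨g, hg, g', hg', w, hw, rfl⟩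
  exact Set.add_mem_add (Set.sub_mem_sub hg hg') hw

lemma neg_mem_GGs {Γ : Set H} {F : Finset H} {z : H} (h : z ∈ GGs Γ F) : -z ∈ GGs Γ F := by
  obtain ⟨g, hg, g', hg', w, hw, rfl⟩ := h
  exact ⟨g', hg', g, hg, -w, neg_mem_spanPM hw, by abel⟩

lemma mem_GGs_of_spanPM {Γ : Set H} {F : Finset H} (hΓ : Γ.Nonempty) {x : H}
    (hx : x ∈ spanPM F) : x ∈ GGs Γ F := by
  obtain ⟨g, hg⟩ := hΓ
  exact ⟨g, hg, g, hg, x, hx, by abel⟩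

lemma greedy {Γ : Set H} (hΓne : Γ.Nonempty) {D : ℝ} {Δ : Finset H}
    (hnc : ¬ Covered Γ D (↑Δ : Set H)) (F : Finset H) :
    ∀ k : ℕ, ((F.card + k : ℕ) : ℝ) ≤ D →
    ∃ L : Finset H, L.card = k ∧ (↑L : Set H) ⊆ (↑Δ : Set H) ∧ Disjoint F L ∧
      ∀ l ∈ L, ∀ l' ∈ L, l ≠ l' → l - l' ∉ GGs Γ F := by
  classical
  intro k
  induction k with
  | zero =>
    intro _
    exact ⟨∅, by simp, by simp, by simp, by simp⟩
  | succ k ih =>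
    intro hk
    obtain ⟨L, hLcard, hLΔ, hLF, hLpair⟩ := ih (by push_cast at hk ⊢; linarith)
    have hpick : ∃ lam ∈ Δ, lam ∉ GGs Γ (F ∪ L) := by
      by_contra hco
      push_neg at hco
      refine hnc ⟨F ∪ L, ?_, ?_⟩
      · have h1 : ((F ∪ L).card : ℝ) ≤ ((F.card + L.card : ℕ) : ℝ) := by
          exact_mod_cast Finset.card_union_le F L
        rw [hLcard] at h1
        push_cast at h1 hk ⊢
        linarith
      · intro z hz
        exact GGs_subset Γ (F ∪ L) (hco z hz)
    obtain ⟨lam, hlamΔ, hlam⟩ := hpick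
    have hlamL : lam ∉ L := fun h =>
      hlam (mem_GGs_of_spanPM hΓne (mem_spanPM_self (Finset.mem_union_right F h)))
    have hlamF : lam ∉ F := fun h =>
      hlam (mem_GGs_of_spanPM hΓne (mem_spanPM_self (Finset.mem_union_left L h)))
    have hkey : ∀ l' ∈ L, lam - l' ∉ GGs Γ F := by
      intro l' hl' hmem
      obtain ⟨g, hg, g', hg', w, hw, heq⟩ := hmem
      apply hlam
      refine ⟨g, hg, g', hg', w + l', add_mem_spanPM_union hLF hw (mem_spanPM_self hl'), ?_⟩
      have h2 : lam = (lam - l') + l' := by abel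
      rw [h2, heq]; abel
    refine ⟨insert lam L, ?_, ?_, ?_, ?_⟩
    · rw [Finset.card_insert_of_notMem hlamL, hLcard]
    · rw [Finset.coe_insert]; exact Set.insert_subset hlamΔ hLΔ
    · exact Finset.disjoint_insert_right.mpr ⟨hlamF, hLF⟩
    · intro l hl l' hl' hne
      rcases Finset.mem_insert.mp hl with rfl | hlL
      · rcases Finset.mem_insert.mp hl' with rfl | hl'L
        · exact absurd rfl hne
        · exact hkey l' hl'L
      · rcases Finset.mem_insert.mp hl' with rfl | hl'L
        · intro hmem
          have h3 := neg_mem_GGs hmem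
          rw [neg_sub] at h3
          exact hkey l hlL h3
        · exact hLpair l hlL l' hl'L hne

end SpanLemmas

section Qfs

variable {H : Type*} [AddCommGroup H] [Fintype H]

noncomputable def Qf (ω : H → ℝ) (a b : ℕ) (S : Set H) : ℝ :=
  ∑ γ : Fin a → H, ∑ γ' : Fin b → H,
    (∏ i, ω (γ i)) * (∏ i, ω (γ' i)) * S.indicator 1 ((∑ i, γ i) - ∑ i, γ' i)

lemma Qf_nonneg {ω : H → ℝ} (hω0 : ∀ x, 0 ≤ ω x) (a b : ℕ) (S : Set H) :
    0 ≤ Qf ω a b S := by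
  refine Finset.sum_nonneg fun γ _ => Finset.sum_nonneg fun γ' _ => ?_
  have h1 : (0:ℝ) ≤ ∏ i, ω (γ i) := Finset.prod_nonneg fun i _ => hω0 _
  have h2 : (0:ℝ) ≤ ∏ i, ω (γ' i) := Finset.prod_nonneg fun i _ => hω0 _
  have h3 : (0:ℝ) ≤ S.indicator 1 ((∑ i, γ i) - ∑ i, γ' i) :=
    Set.indicator_nonneg (fun _ _ => zero_le_one) _
  positivity

lemma sum_indicator_le {L : Finset H} {Sf : H → Set H} {U : Set H}
    (hsub : ∀ l ∈ L, Sf l ⊆ U)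
    (hdisj : ∀ l ∈ L, ∀ l' ∈ L, l ≠ l' → ∀ y, y ∈ Sf l → y ∈ Sf l' → False)
    (y : H) :
    ∑ l ∈ L, (Sf l).indicator (1 : H → ℝ) y ≤ U.indicator 1 y := by
  classical
  by_cases hy : ∃ l₀ ∈ L, y ∈ Sf l₀
  · obtain ⟨l₀, hl₀, hyl₀⟩ := hy
    rw [Finset.sum_eq_single_of_mem l₀ hl₀
      (fun l hl hne => Set.indicator_of_notMem
        (fun hmem => hdisj l hl l₀ hl₀ hne y hmem hyl₀) _)]
    rw [Set.indicator_of_mem hyl₀, Set.indicator_of_mem (hsub l₀ hl₀ hyl₀)]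
  · push_neg at hy
    rw [Finset.sum_eq_zero fun l hl => Set.indicator_of_notMem (hy l hl) _]
    exact Set.indicator_nonneg (fun _ _ => zero_le_one) y

lemma Qf_sum_le {ω : H → ℝ} (hω0 : ∀ x, 0 ≤ ω x) (a b : ℕ) {L : Finset H}
    {Sf : H → Set H} {U : Set H}
    (hsub : ∀ l ∈ L, Sf l ⊆ U)
    (hdisj : ∀ l ∈ L, ∀ l' ∈ L, l ≠ l' → ∀ y, y ∈ Sf l → y ∈ Sf l' → False) :
    ∑ l ∈ L, Qf ω a b (Sf l) ≤ Qf ω a b U := by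
  classical
  unfold Qf
  rw [Finset.sum_comm]
  refine Finset.sum_le_sum fun γ _ => ?_
  rw [Finset.sum_comm]
  refine Finset.sum_le_sum fun γ' _ => ?_
  have h1 : ∑ l ∈ L, (∏ i, ω (γ i)) * (∏ i, ω (γ' i)) * (Sf l).indicator 1 ((∑ i, γ i) - ∑ i, γ' i)
      = (∏ i, ω (γ i)) * (∏ i, ω (γ' i)) *
        ∑ l ∈ L, (Sf l).indicator (1 : H → ℝ) ((∑ i, γ i) - ∑ i, γ' i) := by
    rw [Finset.mul_sum]
  rw [h1]
  have h2 : (0:ℝ) ≤ (∏ i, ω (γ i)) * (∏ i, ω (γ' i)) :=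
    mul_nonneg (Finset.prod_nonneg fun i _ => hω0 _) (Finset.prod_nonneg fun i _ => hω0 _)
  exact mul_le_mul_of_nonneg_left (sum_indicator_le hsub hdisj _) h2

lemma indicator_shiftL (S : Set H) (x z : H) :
    ({y | x + y ∈ S}).indicator (1 : H → ℝ) z = S.indicator 1 (x + z) := by
  by_cases h : x + z ∈ S
  · rw [Set.indicator_of_mem (show z ∈ {y | x + y ∈ S} from h), Set.indicator_of_mem h]
    simp
  · rw [Set.indicator_of_notMem (show z ∉ {y | x + y ∈ S} from h), Set.indicator_of_notMem h]

lemma indicator_shiftR (S : Set H) (x z : H) :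
    ({y | y - x ∈ S}).indicator (1 : H → ℝ) z = S.indicator 1 (z - x) := by
  by_cases h : z - x ∈ S
  · rw [Set.indicator_of_mem (show z ∈ {y | y - x ∈ S} from h), Set.indicator_of_mem h]
    simp
  · rw [Set.indicator_of_notMem (show z ∉ {y | y - x ∈ S} from h), Set.indicator_of_notMem h]

lemma Qf_succ_left (ω : H → ℝ) (a b : ℕ) (S : Set H) :
    Qf ω (a + 1) b S = ∑ x : H, ω x * Qf ω a b {y | x + y ∈ S} := by
  classical
  unfold Qf
  rw [← Equiv.sum_comp (Fin.consEquiv (fun _ : Fin (a+1) => H))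
    (fun γ : Fin (a+1) → H => ∑ γ' : Fin b → H,
      (∏ i, ω (γ i)) * (∏ i, ω (γ' i)) * S.indicator 1 ((∑ i, γ i) - ∑ i, γ' i))]
  rw [Fintype.sum_prod_type]
  refine Finset.sum_congr rfl fun x _ => ?_
  rw [Finset.mul_sum]
  refine Finset.sum_congr rfl fun γ _ => ?_
  rw [Finset.mul_sum]
  refine Finset.sum_congr rfl fun γ' _ => ?_
  simp only [Fin.consEquiv_apply, Fin.prod_univ_succ, Fin.sum_univ_succ, Fin.cons_zero,
    Fin.cons_succ]
  rw [indicator_shiftL, ← add_sub_assoc]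
  ring

lemma Qf_succ_right (ω : H → ℝ) (a b : ℕ) (S : Set H) :
    Qf ω a (b + 1) S = ∑ x : H, ω x * Qf ω a b {y | y - x ∈ S} := by
  classical
  unfold Qf
  have h1 : ∀ γ : Fin a → H,
      (∑ γ' : Fin (b+1) → H,
        (∏ i, ω (γ i)) * (∏ i, ω (γ' i)) * S.indicator 1 ((∑ i, γ i) - ∑ i, γ' i))
      = ∑ x : H, ∑ γ' : Fin b → H,
        (∏ i, ω (γ i)) * (ω x * ∏ i, ω (γ' i)) *
          S.indicator 1 (((∑ i, γ i) - ∑ i, γ' i) - x) := by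
    intro γ
    rw [← Equiv.sum_comp (Fin.consEquiv (fun _ : Fin (b+1) => H))
      (fun γ' : Fin (b+1) → H =>
        (∏ i, ω (γ i)) * (∏ i, ω (γ' i)) * S.indicator 1 ((∑ i, γ i) - ∑ i, γ' i))]
    rw [Fintype.sum_prod_type]
    refine Finset.sum_congr rfl fun x _ => ?_
    refine Finset.sum_congr rfl fun γ' _ => ?_
    simp only [Fin.consEquiv_apply, Fin.prod_univ_succ, Fin.sum_univ_succ, Fin.cons_zero,
      Fin.cons_succ]
    have harg : (∑ i, γ i) - (x + ∑ i, γ' i) = ((∑ i, γ i) - ∑ i, γ' i) - x := by abel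
    rw [harg]
  simp_rw [h1]
  rw [Finset.sum_comm]
  refine Finset.sum_congr rfl fun x _ => ?_
  rw [Finset.mul_sum]
  refine Finset.sum_congr rfl fun γ _ => ?_
  rw [Finset.mul_sum]
  refine Finset.sum_congr rfl fun γ' _ => ?_
  rw [indicator_shiftR]
  ring

lemma Qf_zero_zero (ω : H → ℝ) (S : Set H) : Qf ω 0 0 S ≤ 1 := by
  unfold Qf
  simp only [Fin.prod_univ_zero, Fin.sum_univ_zero, one_mul, sub_zero]
  rw [Fintype.sum_unique, Fintype.sum_unique]
  by_cases h : (0:H) ∈ S <;> simp [h]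

lemma one_step {ω : H → ℝ} (hω0 : ∀ x, 0 ≤ ω x) (g : H → ℝ) (G t₀ θT : ℝ)
    (hG : 0 ≤ G) (ht₀ : 0 ≤ t₀)
    (hg0 : ∀ x, 0 ≤ g x) (hgG : ∀ x, g x ≤ G)
    (hsift : ∀ Δ : Finset H, θT ≤ ∑ γ ∈ Δ, ω γ → ∃ x ∈ Δ, g x ≤ t₀) :
    ∑ x : H, ω x * g x ≤ t₀ * (∑ x : H, ω x) + θT * G := by
  classical
  set Δ : Finset H := Finset.univ.filter (fun x => t₀ < g x) with hΔdef
  have hmass : ∑ γ ∈ Δ, ω γ < θT := by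
    by_contra hc
    push_neg at hc
    obtain ⟨x, hxΔ, hx⟩ := hsift Δ hc
    rw [hΔdef, Finset.mem_filter] at hxΔ
    linarith [hxΔ.2]
  have hsplit : ∑ x : H, ω x * g x
      = ∑ x ∈ Δ, ω x * g x + ∑ x ∈ Finset.univ.filter (fun x => ¬ t₀ < g x), ω x * g x :=
    (Finset.sum_filter_add_sum_filter_not _ _ _).symm
  rw [hsplit]
  have h1 : ∑ x ∈ Δ, ω x * g x ≤ θT * G := by
    calc ∑ x ∈ Δ, ω x * g x ≤ ∑ x ∈ Δ, ω x * G :=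
          Finset.sum_le_sum fun x _ => mul_le_mul_of_nonneg_left (hgG x) (hω0 x)
      _ = (∑ x ∈ Δ, ω x) * G := by rw [Finset.sum_mul]
      _ ≤ θT * G := mul_le_mul_of_nonneg_right hmass.le hG
  have h2 : ∑ x ∈ Finset.univ.filter (fun x => ¬ t₀ < g x), ω x * g x ≤ t₀ * ∑ x : H, ω x := by
    calc ∑ x ∈ Finset.univ.filter (fun x => ¬ t₀ < g x), ω x * g x
        ≤ ∑ x ∈ Finset.univ.filter (fun x => ¬ t₀ < g x), ω x * t₀ :=
          Finset.sum_le_sum fun x hx =>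
            mul_le_mul_of_nonneg_left (not_lt.mp (Finset.mem_filter.mp hx).2) (hω0 x)
      _ = (∑ x ∈ Finset.univ.filter (fun x => ¬ t₀ < g x), ω x) * t₀ := by rw [Finset.sum_mul]
      _ ≤ (∑ x : H, ω x) * t₀ := by
          apply mul_le_mul_of_nonneg_right _ ht₀
          exact Finset.sum_le_sum_of_subset_of_nonneg (Finset.filter_subset _ _)
            fun x _ _ => hω0 x
      _ = t₀ * ∑ x : H, ω x := mul_comm _ _
  linarith

variable [DecidableEq H]

/-- The structured sets for the sifting induction. -/
def SSetQ (Γ : Set H) (c : H) (P N : Finset H) : Set H :=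
  {y | ∃ g ∈ Γ, ∃ u ∈ spanP P, ∃ v ∈ spanP N, c + y = g + u - v}

lemma SSetQ_shiftL (Γ : Set H) (c x : H) (P N : Finset H) :
    {y | x + y ∈ SSetQ Γ c P N} = SSetQ Γ (c + x) P N := by
  ext y
  simp only [Set.mem_setOf_eq, SSetQ]
  constructor
  · rintro ⟨g, hg, u, hu, v, hv, h⟩
    refine ⟨g, hg, u, hu, v, hv, ?_⟩
    rw [add_assoc]; exact h
  · rintro ⟨g, hg, u, hu, v, hv, h⟩
    refine ⟨g, hg, u, hu, v, hv, ?_⟩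
    rw [← add_assoc]; exact h

lemma SSetQ_shiftR (Γ : Set H) (c x : H) (P N : Finset H) :
    {y | y - x ∈ SSetQ Γ c P N} = SSetQ Γ (c - x) P N := by
  ext y
  simp only [Set.mem_setOf_eq, SSetQ]
  constructor
  · rintro ⟨g, hg, u, hu, v, hv, h⟩
    refine ⟨g, hg, u, hu, v, hv, ?_⟩
    rw [show c - x + y = c + (y - x) by abel]; exact h
  · rintro ⟨g, hg, u, hu, v, hv, h⟩
    refine ⟨g, hg, u, hu, v, hv, ?_⟩
    rw [show c + (y - x) = c - x + y by abel]; exact h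

lemma main_bound (Γ : Set H) (ω : H → ℝ) (hω0 : ∀ γ, 0 ≤ ω γ) (hΓne : Γ.Nonempty)
    (m d n K : ℕ) (hK0 : 0 < K) (hbud : 2 * m * K ≤ 2 * d)
    (hnc : ¬∃ Δ : Finset H, (n / d : ℝ) * norm1 ω ≤ ∑ γ ∈ Δ, ω γ ∧
      Covered Γ (2 * d) (↑Δ : Set H)) :
    ∀ t a b, a + b = t →
      ∀ (c : H) (P N : Finset H), Disjoint P N →
        P.card + N.card + (a + b) * K ≤ 2 * m * K →
        Qf ω a b (SSetQ Γ c P N) ≤ ((1 / (K:ℝ) + (n:ℝ) / d) * norm1 ω) ^ (a + b) := by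
  classical
  have hT0 : 0 ≤ norm1 ω := Finset.sum_nonneg fun x _ => hω0 x
  have hKR : (0:ℝ) < K := by exact_mod_cast hK0
  have hBB0 : 0 ≤ (1 / (K:ℝ) + (n:ℝ) / d) * norm1 ω := by positivity
  have hTsum : norm1 ω = ∑ x : H, ω x := rfl
  intro t
  induction t with
  | zero =>
    intro a b hab c P N _ _
    obtain ⟨rfl, rfl⟩ : a = 0 ∧ b = 0 := by omega
    simpa using Qf_zero_zero ω (SSetQ Γ c P N)
  | succ t ih =>
    intro a b hab c P N hPN hbudget
    set BB : ℝ := (1 / (K:ℝ) + (n:ℝ) / d) * norm1 ω with hBBdef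
    cases a with
    | succ a' =>
      have hab' : a' + b = t := by omega
      rw [Qf_succ_left]
      simp only [SSetQ_shiftL]
      set G : ℝ := BB ^ (a' + b) with hGdef
      have hG0 : 0 ≤ G := pow_nonneg hBB0 _
      have hsmall : P.card + N.card + (a' + b) * K ≤ 2 * m * K := by
        have h1 : (a' + b) * K ≤ (a' + 1 + b) * K := Nat.mul_le_mul_right K (by omega)
        exact le_trans (Nat.add_le_add_left h1 _) hbudget
      have hgG : ∀ x : H, Qf ω a' b (SSetQ Γ (c + x) P N) ≤ G :=
        fun x => ih a' b hab' (c + x) P N hPN hsmall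
      have hg0 : ∀ x : H, 0 ≤ Qf ω a' b (SSetQ Γ (c + x) P N) :=
        fun x => Qf_nonneg hω0 a' b _
      have hsift : ∀ Δ : Finset H, (n / d : ℝ) * norm1 ω ≤ ∑ γ ∈ Δ, ω γ →
          ∃ x ∈ Δ, Qf ω a' b (SSetQ Γ (c + x) P N) ≤ G / K := by
        intro Δ hΔmass
        have hncov : ¬ Covered Γ (2 * d) (↑Δ : Set H) := fun hcov => hnc ⟨Δ, hΔmass, hcov⟩
        have hKle : K ≤ (a' + 1 + b) * K := Nat.le_mul_of_pos_left K (by omega)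
        have h4 : (P ∪ N).card + K ≤ 2 * d :=
          le_trans (Nat.add_le_add (Finset.card_union_le P N) hKle) (le_trans hbudget hbud)
        obtain ⟨L, hLcard, hLΔ, hLdisj, hLpair⟩ := greedy hΓne hncov (P ∪ N) K (by
          push_cast
          exact_mod_cast h4)
        have hLP : Disjoint P L := (Finset.disjoint_union_left.mp hLdisj).1
        have hLN : Disjoint N L := (Finset.disjoint_union_left.mp hLdisj).2
        have hQle : ∑ l ∈ L, Qf ω a' b (SSetQ Γ (c + l) P N)
            ≤ Qf ω a' b (SSetQ Γ c P (N ∪ L)) := by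
          apply Qf_sum_le hω0
          · intro l hl y hy
            obtain ⟨g₁, hg₁, u, hu, v, hv, h⟩ := hy
            have hlN : l ∉ N := Finset.disjoint_left.mp hLN.symm hl
            refine ⟨g₁, hg₁, u, hu, v + l, spanP_shift hv hl hlN, ?_⟩
            rw [eq_sub_iff_add_eq] at h ⊢
            rw [← h]; abel
          · intro l hl l' hl' hne y hyl hyl'
            obtain ⟨g₁, hg₁, u, hu, v, hv, h1⟩ := hyl
            obtain ⟨g₂, hg₂, u', hu', v', hv', h2⟩ := hyl'
            apply hLpair l hl l' hl' hne
            refine ⟨g₁, hg₁, g₂, hg₂, (u - u') + (v' - v),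
              add_mem_spanPM_union hPN (sub_mem_spanPM hu hu') (sub_mem_spanPM hv' hv), ?_⟩
            have e1 : l - l' = (c + l + y) - (c + l' + y) := by abel
            rw [e1, h1, h2]; abel
        have hdisj' : Disjoint P (N ∪ L) := Finset.disjoint_union_right.mpr ⟨hPN, hLP⟩
        have hbud' : P.card + (N ∪ L).card + (a' + b) * K ≤ 2 * m * K := by
          have hNL : (N ∪ L).card ≤ N.card + K :=
            le_trans (Finset.card_union_le N L) (by rw [hLcard])
          have hmul : (a' + 1 + b) * K = (a' + b) * K + K := by ring
          calc P.card + (N ∪ L).card + (a' + b) * K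
              ≤ P.card + (N.card + K) + (a' + b) * K :=
                Nat.add_le_add_right (Nat.add_le_add_left hNL _) _
            _ = P.card + N.card + (a' + 1 + b) * K := by rw [hmul]; ring
            _ ≤ 2 * m * K := hbudget
        have hsum : ∑ l ∈ L, Qf ω a' b (SSetQ Γ (c + l) P N) ≤ G :=
          hQle.trans (ih a' b hab' c P (N ∪ L) hdisj' hbud')
        by_contra hcon
        push_neg at hcon
        have hLne : L.Nonempty := Finset.card_pos.mp (by rw [hLcard]; exact hK0)
        have hlt : ∑ _l ∈ L, (G / K) < ∑ l ∈ L, Qf ω a' b (SSetQ Γ (c + l) P N) :=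
          Finset.sum_lt_sum_of_nonempty hLne fun l hl =>
            hcon l (Finset.mem_coe.mp (hLΔ (Finset.mem_coe.mpr hl)))
        rw [Finset.sum_const, hLcard, nsmul_eq_mul] at hlt
        have heq : (K:ℝ) * (G / K) = G := by field_simp
        rw [heq] at hlt
        linarith
      have hres := one_step hω0 (fun x => Qf ω a' b (SSetQ Γ (c + x) P N)) G (G / K)
        ((n / d : ℝ) * norm1 ω) hG0 (by positivity) hg0 hgG hsift
      calc ∑ x : H, ω x * Qf ω a' b (SSetQ Γ (c + x) P N)
          ≤ G / K * (∑ x : H, ω x) + ((n / d : ℝ) * norm1 ω) * G := hres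
        _ = BB ^ (a' + 1 + b) := by
            rw [← hTsum, hGdef, hBBdef, show a' + 1 + b = (a' + b) + 1 by omega, pow_succ]
            ring
    | zero =>
      cases b with
      | zero => omega
      | succ b' =>
        have hab' : 0 + b' = t := by omega
        rw [Qf_succ_right]
        simp only [SSetQ_shiftR]
        set G : ℝ := BB ^ (0 + b') with hGdef
        have hG0 : 0 ≤ G := pow_nonneg hBB0 _
        have hsmall : P.card + N.card + (0 + b') * K ≤ 2 * m * K := by
          have h1 : (0 + b') * K ≤ (0 + (b' + 1)) * K := Nat.mul_le_mul_right K (by omega)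
          exact le_trans (Nat.add_le_add_left h1 _) hbudget
        have hgG : ∀ x : H, Qf ω 0 b' (SSetQ Γ (c - x) P N) ≤ G :=
          fun x => ih 0 b' hab' (c - x) P N hPN hsmall
        have hg0 : ∀ x : H, 0 ≤ Qf ω 0 b' (SSetQ Γ (c - x) P N) :=
          fun x => Qf_nonneg hω0 0 b' _
        have hsift : ∀ Δ : Finset H, (n / d : ℝ) * norm1 ω ≤ ∑ γ ∈ Δ, ω γ →
            ∃ x ∈ Δ, Qf ω 0 b' (SSetQ Γ (c - x) P N) ≤ G / K := by
          intro Δ hΔmass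
          have hncov : ¬ Covered Γ (2 * d) (↑Δ : Set H) := fun hcov => hnc ⟨Δ, hΔmass, hcov⟩
          have hKle : K ≤ (0 + (b' + 1)) * K := Nat.le_mul_of_pos_left K (by omega)
          have h4 : (P ∪ N).card + K ≤ 2 * d :=
            le_trans (Nat.add_le_add (Finset.card_union_le P N) hKle) (le_trans hbudget hbud)
          obtain ⟨L, hLcard, hLΔ, hLdisj, hLpair⟩ := greedy hΓne hncov (P ∪ N) K (by
            push_cast
            exact_mod_cast h4)
          have hLP : Disjoint P L := (Finset.disjoint_union_left.mp hLdisj).1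
          have hLN : Disjoint N L := (Finset.disjoint_union_left.mp hLdisj).2
          have hQle : ∑ l ∈ L, Qf ω 0 b' (SSetQ Γ (c - l) P N)
              ≤ Qf ω 0 b' (SSetQ Γ c (P ∪ L) N) := by
            apply Qf_sum_le hω0
            · intro l hl y hy
              obtain ⟨g₁, hg₁, u, hu, v, hv, h⟩ := hy
              have hlP : l ∉ P := Finset.disjoint_left.mp hLP.symm hl
              refine ⟨g₁, hg₁, u + l, spanP_shift hu hl hlP, v, hv, ?_⟩
              rw [eq_sub_iff_add_eq] at h ⊢
              rw [show c + y + v = (c - l + y + v) + l by abel, h]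
              abel
            · intro l hl l' hl' hne y hyl hyl'
              obtain ⟨g₁, hg₁, u, hu, v, hv, h1⟩ := hyl
              obtain ⟨g₂, hg₂, u', hu', v', hv', h2⟩ := hyl'
              apply hLpair l' hl' l hl hne.symm
              refine ⟨g₁, hg₁, g₂, hg₂, (u - u') + (v' - v),
                add_mem_spanPM_union hPN (sub_mem_spanPM hu hu') (sub_mem_spanPM hv' hv), ?_⟩
              have e1 : l' - l = (c - l + y) - (c - l' + y) := by abel
              rw [e1, h1, h2]; abel
          have hdisj' : Disjoint (P ∪ L) N := Finset.disjoint_union_left.mpr ⟨hPN, hLN.symm⟩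
          have hbud' : (P ∪ L).card + N.card + (0 + b') * K ≤ 2 * m * K := by
            have hPL : (P ∪ L).card ≤ P.card + K :=
              le_trans (Finset.card_union_le P L) (by rw [hLcard])
            have hmul : (0 + (b' + 1)) * K = (0 + b') * K + K := by ring
            calc (P ∪ L).card + N.card + (0 + b') * K
                ≤ (P.card + K) + N.card + (0 + b') * K :=
                  Nat.add_le_add_right (Nat.add_le_add_right hPL _) _
              _ = P.card + N.card + (0 + (b' + 1)) * K := by rw [hmul]; ring
              _ ≤ 2 * m * K := hbudget
          have hsum : ∑ l ∈ L, Qf ω 0 b' (SSetQ Γ (c - l) P N) ≤ G :=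
            hQle.trans (ih 0 b' hab' c (P ∪ L) N hdisj' hbud')
          by_contra hcon
          push_neg at hcon
          have hLne : L.Nonempty := Finset.card_pos.mp (by rw [hLcard]; exact hK0)
          have hlt : ∑ _l ∈ L, (G / K) < ∑ l ∈ L, Qf ω 0 b' (SSetQ Γ (c - l) P N) :=
            Finset.sum_lt_sum_of_nonempty hLne fun l hl =>
              hcon l (Finset.mem_coe.mp (hLΔ (Finset.mem_coe.mpr hl)))
          rw [Finset.sum_const, hLcard, nsmul_eq_mul] at hlt
          have heq : (K:ℝ) * (G / K) = G := by field_simp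
          rw [heq] at hlt
          linarith
        have hres := one_step hω0 (fun x => Qf ω 0 b' (SSetQ Γ (c - x) P N)) G (G / K)
          ((n / d : ℝ) * norm1 ω) hG0 (by positivity) hg0 hgG hsift
        calc ∑ x : H, ω x * Qf ω 0 b' (SSetQ Γ (c - x) P N)
            ≤ G / K * (∑ x : H, ω x) + ((n / d : ℝ) * norm1 ω) * G := hres
          _ = BB ^ (0 + (b' + 1)) := by
              rw [← hTsum, hGdef, hBBdef, show 0 + (b' + 1) = (0 + b') + 1 by omega, pow_succ]
              ring

end Qfs

lemma keynum (m n : ℕ) (hm0 : 0 < m) :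
    (2 * (m:ℝ) + n) ^ (2 * m) ≤ 2 ^ (13 * m + 6 * n) * (m:ℝ) ^ (2 * m) := by
  have hmR : (0:ℝ) < m := by exact_mod_cast hm0
  have h2m : (0:ℝ) < 2 * m := by linarith
  have h1 : 2 * (m:ℝ) + n ≤ 2 * m * Real.exp ((n:ℝ) / (2 * m)) := by
    have h2 := Real.add_one_le_exp ((n:ℝ) / (2 * m))
    have h3 : 2 * (m:ℝ) * ((n:ℝ) / (2 * m) + 1) = 2 * m + n := by field_simp; ring
    calc 2 * (m:ℝ) + n = 2 * m * ((n:ℝ) / (2 * m) + 1) := h3.symm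
      _ ≤ 2 * m * Real.exp ((n:ℝ) / (2 * m)) := by
          exact mul_le_mul_of_nonneg_left h2 (by positivity)
  calc (2 * (m:ℝ) + n) ^ (2 * m)
      ≤ (2 * (m:ℝ) * Real.exp ((n:ℝ) / (2 * m))) ^ (2 * m) :=
        pow_le_pow_left₀ (by positivity) h1 _
    _ = (2 * (m:ℝ)) ^ (2 * m) * Real.exp ((n:ℝ) / (2 * m)) ^ (2 * m) := mul_pow _ _ _
    _ = (2 * (m:ℝ)) ^ (2 * m) * Real.exp (n:ℝ) := by
        rw [← Real.exp_nat_mul]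
        congr 1
        push_cast
        field_simp
    _ ≤ (2 * (m:ℝ)) ^ (2 * m) * 4 ^ n := by
        have he : Real.exp (n:ℝ) = Real.exp 1 ^ n := by
          rw [← Real.exp_nat_mul]; norm_num
        rw [he]
        refine mul_le_mul_of_nonneg_left ?_ (by positivity)
        exact pow_le_pow_left₀ (Real.exp_pos 1).le
          (by linarith [Real.exp_one_lt_d9]) n
    _ = 2 ^ (2 * m + 2 * n) * (m:ℝ) ^ (2 * m) := by
        rw [mul_pow, show (4:ℝ) = 2 ^ 2 by norm_num, ← pow_mul, pow_add]
        ring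
    _ ≤ 2 ^ (13 * m + 6 * n) * (m:ℝ) ^ (2 * m) := by
        refine mul_le_mul_of_nonneg_right ?_ (by positivity)
        exact pow_le_pow_right₀ one_le_two (by omega)

/-- **The dichotomy between covering and small energy.** For symmetric `Γ` and a
weight `ω` with `‖ω‖₂ ≤ √m·d⁻¹·‖ω‖₁`, either some `Δ` of `ω`-mass at least
`(n/d)·‖ω‖₁` is `2d`-covered by `Γ`, or
`E_{2m}(ω,Γ) ≤ 2^{13m+6n}·m^{2m}·d^{−2m}·‖ω‖₁^{2m}`. -/
theorem covered_or_small_energy {H : Type*} [AddCommGroup H] [Fintype H]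
    (Γ : Set H) (hΓ : Γ = -Γ) (ω : H → ℝ) (hω0 : ∀ γ, 0 ≤ ω γ) (hωne : ω ≠ 0)
    (m d n : ℕ) (hm : 2 ≤ m) (hn : 2 ≤ n) (hnd : n ≤ d)
    (hmd : (m : ℝ) ≤ (d : ℝ) / 4)
    (hω2 : norm2 ω ≤ Real.sqrt m * (d : ℝ)⁻¹ * norm1 ω) :
    (∃ Δ : Finset H, (n / d : ℝ) * norm1 ω ≤ ∑ γ ∈ Δ, ω γ ∧
        Covered Γ (2 * d) (Δ : Set H)) ∨
      energy ω Γ m ≤ 2 ^ (13 * m + 6 * n) * (m : ℝ) ^ (2 * m) *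
        ((d : ℝ) ^ (2 * m))⁻¹ * norm1 ω ^ (2 * m) := by
    classical
  by_cases halt : ∃ Δ : Finset H, (n / d : ℝ) * norm1 ω ≤ ∑ γ ∈ Δ, ω γ ∧
      Covered Γ (2 * d) (Δ : Set H)
  · exact Or.inl halt
  right
  have hT0 : 0 ≤ norm1 ω := Finset.sum_nonneg fun x _ => hω0 x
  have hm0 : 0 < m := by omega
  have hd0 : 0 < d := by omega
  have hdR : (0:ℝ) < d := by exact_mod_cast hd0
  have hmR : (0:ℝ) < m := by exact_mod_cast hm0
  by_cases hΓe : Γ = ∅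
  · have h0 : energy ω Γ m = 0 := by
      rw [hΓe]
      simp [energy]
    rw [h0]
    positivity
  have hΓne : Γ.Nonempty := Set.nonempty_iff_ne_empty.mpr hΓe
  have h4m : 4 * m ≤ d := by
    have h1 : (m:ℝ) * 4 ≤ d := (le_div_iff₀ (by norm_num : (0:ℝ) < 4)).mp hmd
    have h2 : ((4 * m : ℕ) : ℝ) ≤ (d:ℝ) := by push_cast; linarith
    exact_mod_cast h2
  have hmd' : m ≤ d := by omega
  set K : ℕ := d / m with hKdef
  have hK0 : 0 < K := Nat.div_pos hmd' hm0
  have hKR : (0:ℝ) < K := by exact_mod_cast hK0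
  have hKm : K * m ≤ d := Nat.div_mul_le_self d m
  have hbud : 2 * m * K ≤ 2 * d := by
    calc 2 * m * K = 2 * (K * m) := by ring
      _ ≤ 2 * d := by omega
  have hd2mK : d ≤ 2 * (m * K) := by
    have hmod : m * K + d % m = d := Nat.div_add_mod d m
    have hlt : d % m < m := Nat.mod_lt _ hm0
    have hle : m ≤ m * K := Nat.le_mul_of_pos_right m hK0
    calc d = m * K + d % m := hmod.symm
      _ ≤ m * K + m := Nat.add_le_add_left hlt.le _
      _ ≤ m * K + m * K := Nat.add_le_add_left hle _
      _ = 2 * (m * K) := (two_mul _).symm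
  have hmain := main_bound Γ ω hω0 hΓne m d n K hK0 hbud halt (m + m) m m rfl 0 ∅ ∅
    (Finset.disjoint_empty_left _) (by
      rw [Finset.card_empty]
      exact Nat.le_of_eq (by ring))
  have hSS0 : SSetQ Γ (0:H) ∅ ∅ = Γ := by
    ext y
    constructor
    · rintro ⟨g, hg, u, hu, v, hv, h⟩
      obtain ⟨Yu, hYu, rfl⟩ := hu
      obtain ⟨Yv, hYv, rfl⟩ := hv
      rw [Finset.subset_empty] at hYu hYv
      subst hYu; subst hYv
      simp only [Finset.sum_empty, add_zero, sub_zero, zero_add] at h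
      rwa [h]
    · intro hy
      exact ⟨y, hy, 0, zero_mem_spanP ∅, 0, zero_mem_spanP ∅, by simp⟩
  have henergy : energy ω Γ m = Qf ω m m (SSetQ Γ 0 ∅ ∅) := by rw [hSS0]; rfl
  rw [henergy]
  have hd2mKR : (d:ℝ) ≤ 2 * m * K := by
    have := hd2mK
    push_cast
    calc (d:ℝ) ≤ ((2 * (m * K) : ℕ) : ℝ) := by exact_mod_cast this
      _ = 2 * (m:ℝ) * K := by push_cast; ring
  have h1K : 1 / (K:ℝ) ≤ 2 * m / d := by
    rw [div_le_div_iff₀ hKR hdR]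
    linarith
  have hbase : 1 / (K:ℝ) + (n:ℝ) / d ≤ (2 * m + n) / d := by
    rw [add_div]
    exact add_le_add_left h1K _
  have hchain : Qf ω m m (SSetQ Γ 0 ∅ ∅) ≤ ((2 * (m:ℝ) + n) / d * norm1 ω) ^ (m + m) :=
    hmain.trans (pow_le_pow_left₀ (by positivity)
      (mul_le_mul_of_nonneg_right hbase hT0) _)
  refine hchain.trans ?_
  have hmm : m + m = 2 * m := by omega
  rw [hmm, mul_pow, div_pow]
  have hkey := keynum m n hm0
  calc (2 * (m:ℝ) + n) ^ (2 * m) / (d:ℝ) ^ (2 * m) * norm1 ω ^ (2 * m)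
      = (2 * (m:ℝ) + n) ^ (2 * m) * (((d:ℝ) ^ (2 * m))⁻¹ * norm1 ω ^ (2 * m)) := by ring
    _ ≤ (2 ^ (13 * m + 6 * n) * (m:ℝ) ^ (2 * m)) * (((d:ℝ) ^ (2 * m))⁻¹ * norm1 ω ^ (2 * m)) :=
        mul_le_mul_of_nonneg_right hkey (by positivity)
    _ = 2 ^ (13 * m + 6 * n) * (m : ℝ) ^ (2 * m) * ((d : ℝ) ^ (2 * m))⁻¹ * norm1 ω ^ (2 * m) := by
        ring
end

section
/- Let G be a finite abelian group with |G| = N, let B ⊆ G be nonempty, let f: G → [0,1] be supported on B, set α = ‖f‖₁/|B| and 𝐟 = f − α·1_B, and let ν > 0 and Γ ⊆ Ĝ. Suppose ∑_{γ∈Γ} |𝐟̂(γ)|² ≥ ν·α·‖f‖₁·N. Then for every symmetric set B' ⊆ G (B' = −B') such that |B̂'(γ)| ≥ |B'|/2 for every γ ∈ Γ, and such that |(B' + B' + B) \ B| ≤ 2^{−4}·ν·α·|B|, one has ‖f ∗ 1_{B'}‖_∞ ≥ (1 + 2^{−3}ν)·α·|B'|. -/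
open scoped BigOperators Pointwise

/-- The Fourier transform of a real function, `f̂(γ) = ∑_x f(x)γ(x)`. -/
noncomputable def dftR {G : Type*} [AddCommGroup G] [Fintype G]
    (f : G → ℝ) (γ : AddChar G ℂ) : ℂ := ∑ x, (f x : ℂ) * γ x

section Aux

variable {G : Type*} [AddCommGroup G] [Fintype G] [DecidableEq G]

lemma sum_shift_ind (s : Finset G) (e : G ≃ G) :
    ∑ y : G, (if e y ∈ s then (1:ℝ) else 0) = s.card := by
  rw [Equiv.sum_comp e (fun z => if z ∈ s then (1:ℝ) else 0)]
  simp

lemma dftR_conv (u v : G → ℝ) (γ : AddChar G ℂ) :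
    dftR (fun x => ∑ y, u y * v (x - y)) γ = dftR u γ * dftR v γ := by
  unfold dftR
  push_cast
  simp_rw [Finset.sum_mul]
  rw [Finset.sum_comm]
  refine Finset.sum_congr rfl fun y _ => ?_
  rw [Finset.mul_sum]
  rw [← Equiv.sum_comp (Equiv.addLeft y) (fun x => ((u y : ℂ) * (v (x - y) : ℂ)) * γ x)]
  refine Finset.sum_congr rfl fun c _ => ?_
  simp only [Equiv.coe_addLeft, add_sub_cancel_left, AddChar.map_add_eq_mul]
  ring

lemma parsevalC (u : G → ℝ) :
    ∑ γ : AddChar G ℂ, dftR u γ * (starRingEnd ℂ) (dftR u γ)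
      = (Fintype.card G : ℂ) * ∑ x, (u x : ℂ) ^ 2 := by
  have h1 : ∀ γ : AddChar G ℂ, dftR u γ * (starRingEnd ℂ) (dftR u γ)
      = ∑ a, ∑ b, ((u a : ℂ) * u b) * γ (a - b) := by
    intro γ
    unfold dftR
    rw [map_sum, Finset.sum_mul_sum]
    refine Finset.sum_congr rfl fun a _ => Finset.sum_congr rfl fun b _ => ?_
    rw [map_mul, Complex.conj_ofReal, ← AddChar.map_neg_eq_conj, sub_eq_add_neg,
      AddChar.map_add_eq_mul]
    ring
  simp_rw [h1]
  rw [Finset.sum_comm]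
  have h2 : ∀ a : G, ∑ γ : AddChar G ℂ, ∑ b, ((u a : ℂ) * u b) * γ (a - b)
      = (u a : ℂ) ^ 2 * Fintype.card G := by
    intro a
    rw [Finset.sum_comm]
    have h3 : ∀ b : G, ∑ γ : AddChar G ℂ, ((u a : ℂ) * u b) * γ (a - b)
        = ((u a : ℂ) * u b) * (if a - b = 0 then (Fintype.card G : ℂ) else 0) := by
      intro b
      rw [← Finset.mul_sum, AddChar.sum_apply_eq_ite]
    simp_rw [h3, sub_eq_zero, mul_ite, mul_zero]
    simp [sq]
  simp_rw [h2]
  rw [← Finset.sum_mul, mul_comm]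

lemma parsevalR (u : G → ℝ) :
    ∑ γ : AddChar G ℂ, ‖dftR u γ‖ ^ 2 = Fintype.card G * ∑ x, u x ^ 2 := by
  have h := parsevalC u
  have h2 : ((∑ γ : AddChar G ℂ, ‖dftR u γ‖ ^ 2 : ℝ) : ℂ)
      = ((Fintype.card G * ∑ x, u x ^ 2 : ℝ) : ℂ) := by
    push_cast
    simp_rw [← Complex.ofReal_pow, Complex.sq_norm, ← Complex.mul_conj]
    rw [h]; norm_cast
  exact_mod_cast h2

lemma conv_sum (h : G → ℝ) (s : Finset G) :
    ∑ x : G, ∑ y, h y * (if x - y ∈ s then (1:ℝ) else 0) = (∑ y, h y) * s.card := by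
  rw [Finset.sum_comm]
  have h1 : ∀ y : G, ∑ x : G, h y * (if x - y ∈ s then (1:ℝ) else 0) = h y * s.card := by
    intro y
    rw [← Finset.mul_sum]
    congr 1
    have := sum_shift_ind s (Equiv.subRight y)
    simpa [Equiv.subRight_apply] using this
  simp_rw [h1]
  rw [Finset.sum_mul]

end Aux

set_option maxHeartbeats 1000000 in
/-- **From `L²` mass of the balanced function on a spectrum to a density increment.** -/
theorem l2_density_increment {G : Type*} [AddCommGroup G] [Fintype G] [DecidableEq G]
    (B : Finset G) (hB : B.Nonempty)
    (f : G → ℝ) (hf0 : ∀ x, 0 ≤ f x) (hf1 : ∀ x, f x ≤ 1)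
    (hfB : ∀ x, f x ≠ 0 → x ∈ B)
    (α : ℝ) (hα : α = (∑ x, |f x|) / B.card)
    (ν : ℝ) (hν : 0 < ν) (Γ : Finset (AddChar G ℂ))
    (hΓ : ν * α * (∑ x, |f x|) * Fintype.card G ≤
      ∑ γ ∈ Γ, ‖dftR (fun x => f x - α * if x ∈ B then 1 else 0) γ‖ ^ 2)
    (B' : Finset G) (hB'symm : ∀ x ∈ B', -x ∈ B')
    (hB'Γ : ∀ γ ∈ Γ, (B'.card : ℝ) / 2 ≤ ‖∑ x ∈ B', γ x‖)
    (hadd : (((B' + B' + B) \ B).card : ℝ) ≤ 2 ^ (-4 : ℤ) * ν * α * B.card) :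
    (1 + 2 ^ (-3 : ℤ) * ν) * α * B'.card ≤
      ⨆ x : G, |∑ y, f y * if x - y ∈ B' then 1 else 0| := by
  classical
  have hLf : (∑ x, |f x|) = ∑ x, f x := Finset.sum_congr rfl fun x _ => abs_of_nonneg (hf0 x)
  rw [hLf] at hα hΓ
  set L : ℝ := ∑ x, f x with hLdef
  have hL0 : 0 ≤ L := Finset.sum_nonneg fun x _ => hf0 x
  have hα0 : 0 ≤ α := by rw [hα]; positivity
  have hbdd : BddAbove (Set.range fun x : G => |∑ y, f y * if x - y ∈ B' then (1:ℝ) else 0|) :=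
    Set.Finite.bddAbove (Set.finite_range _)
  have hRHS0 : (0:ℝ) ≤ ⨆ x : G, |∑ y, f y * if x - y ∈ B' then (1:ℝ) else 0| :=
    le_trans (abs_nonneg _) (le_ciSup hbdd 0)
  by_cases hL : L = 0
  · have hA : α = 0 := by rw [hα, hL]; simp
    rw [hA]; simpa using hRHS0
  by_cases hKz : B'.card = 0
  · rw [hKz]; simpa using hRHS0
  have hLpos : 0 < L := lt_of_le_of_ne hL0 (Ne.symm hL)
  set K : ℝ := (B'.card : ℝ) with hKdef
  have hKpos : (0:ℝ) < K := by
    rw [hKdef]; exact_mod_cast Nat.pos_of_ne_zero hKz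
  have hBcard : (0:ℝ) < B.card := by exact_mod_cast hB.card_pos
  have hαB : α * B.card = L := by rw [hα]; field_simp
  set μ : G → ℝ := fun x => if x ∈ B' then (1:ℝ) else 0 with hμdef
  have hμ0 : ∀ z, 0 ≤ μ z := by intro z; rw [hμdef]; dsimp only; split_ifs <;> norm_num
  have hμ1 : ∀ z, μ z ≤ 1 := by intro z; rw [hμdef]; dsimp only; split_ifs <;> norm_num
  have hμsum : ∑ z, μ z = K := by
    rw [hμdef, hKdef]
    simpa using sum_shift_ind B' (Equiv.refl G)
  have hμsumc : ∀ x : G, ∑ y, μ (x - y) = K := by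
    intro x
    rw [hμdef, hKdef]
    have := sum_shift_ind B' (Equiv.subLeft x)
    simpa [Equiv.subLeft_apply] using this
  set g : G → ℝ := fun x => ∑ y, f y * μ (x - y) with hgdef
  set b : G → ℝ := fun x => ∑ y, (if y ∈ B then (1:ℝ) else 0) * μ (x - y) with hbdef
  set F : G → ℝ := fun x => f x - α * (if x ∈ B then (1:ℝ) else 0) with hFdef
  set Fc : G → ℝ := fun x => ∑ y, F y * μ (x - y) with hFcdef
  have hN : (0:ℝ) < Fintype.card G := by exact_mod_cast Fintype.card_pos
  -- Step 1 : Fourier lower bound for ∑ Fc²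
  have hdftμ : ∀ γ : AddChar G ℂ, dftR μ γ = ∑ x ∈ B', γ x := by
    intro γ
    rw [hμdef]; unfold dftR
    rw [← Finset.univ_inter B', ← Finset.sum_ite_mem]
    refine Finset.sum_congr rfl fun x _ => ?_
    by_cases h : x ∈ B' <;> simp [h]
  have hstep1 : ν * α * L * (Fintype.card G : ℝ) * (K/2)^2
      ≤ (Fintype.card G : ℝ) * ∑ x, Fc x ^ 2 := by
    have hconv : ∀ γ : AddChar G ℂ,
        ‖dftR Fc γ‖ ^ 2
          = ‖dftR F γ‖ ^ 2 * ‖dftR μ γ‖ ^ 2 := by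
      intro γ
      rw [hFcdef, dftR_conv, norm_mul, mul_pow]
    calc ν * α * L * (Fintype.card G : ℝ) * (K/2)^2
        ≤ (∑ γ ∈ Γ, ‖dftR F γ‖ ^ 2) * (K/2)^2 :=
          mul_le_mul_of_nonneg_right hΓ (by positivity)
      _ = ∑ γ ∈ Γ, ‖dftR F γ‖ ^ 2 * (K/2)^2 := Finset.sum_mul _ _ _
      _ ≤ ∑ γ ∈ Γ, ‖dftR F γ‖ ^ 2 * ‖dftR μ γ‖ ^ 2 := by
          refine Finset.sum_le_sum fun γ hγ => ?_
          have h1 : K/2 ≤ ‖dftR μ γ‖ := by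
            rw [hdftμ γ, hKdef]; exact hB'Γ γ hγ
          have h2 : (K/2)^2 ≤ ‖dftR μ γ‖ ^ 2 :=
            pow_le_pow_left₀ (by positivity) h1 2
          exact mul_le_mul_of_nonneg_left h2 (by positivity)
      _ ≤ ∑ γ : AddChar G ℂ, ‖dftR F γ‖ ^ 2 * ‖dftR μ γ‖ ^ 2 :=
          Finset.sum_le_sum_of_subset_of_nonneg (Finset.subset_univ Γ)
            (fun γ _ _ => by positivity)
      _ = ∑ γ : AddChar G ℂ, ‖dftR Fc γ‖ ^ 2 := by simp_rw [hconv]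
      _ = (Fintype.card G : ℝ) * ∑ x, Fc x ^ 2 := parsevalR Fc
  have hS : ν * α * L * (K/2)^2 ≤ ∑ x, Fc x ^ 2 := by
    have h := hstep1
    rw [show ν * α * L * (Fintype.card G : ℝ) * (K/2)^2
        = (Fintype.card G : ℝ) * (ν * α * L * (K/2)^2) from by ring] at h
    exact le_of_mul_le_mul_left h hN
  -- Step 2 : pointwise decomposition Fc = g - α b
  have hFcx : ∀ x, Fc x = g x - α * b x := by
    intro x
    rw [hFcdef, hgdef, hbdef, hFdef]
    dsimp only
    rw [Finset.mul_sum, ← Finset.sum_sub_distrib]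
    exact Finset.sum_congr rfl fun y _ => by ring
  have hexp : ∑ x, g x ^ 2
      = (∑ x, Fc x ^ 2) + 2*α*(∑ x, g x * b x) - α^2 * (∑ x, b x ^ 2) := by
    rw [Finset.mul_sum, Finset.mul_sum, ← Finset.sum_add_distrib, ← Finset.sum_sub_distrib]
    refine Finset.sum_congr rfl fun x _ => ?_
    rw [hFcx x]; ring
  -- Step 3 : bounds for b
  have hb0 : ∀ x, 0 ≤ b x := by
    intro x; rw [hbdef]; dsimp only
    exact Finset.sum_nonneg fun y _ =>
      mul_nonneg (by split_ifs <;> norm_num) (hμ0 _)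
  have hbK : ∀ x, b x ≤ K := by
    intro x
    calc b x ≤ ∑ y, μ (x - y) := by
          rw [hbdef]; dsimp only
          refine Finset.sum_le_sum fun y _ => ?_
          split_ifs <;> simp [hμ0 (x - y)]
      _ = K := hμsumc x
  have hbsum : ∑ x, b x = B.card * K := by
    rw [hbdef, hμdef, hKdef]
    dsimp only
    rw [conv_sum]
    congr 1
    simp
  have hU : ∑ x, b x ^ 2 ≤ B.card * K^2 := by
    calc ∑ x, b x ^ 2 ≤ ∑ x, b x * K := by
          refine Finset.sum_le_sum fun x _ => ?_
          rw [sq]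
          exact mul_le_mul_of_nonneg_left (hbK x) (hb0 x)
      _ = (B.card * K) * K := by rw [← Finset.sum_mul, hbsum]
      _ = B.card * K^2 := by ring
  -- bounds for g
  have hg0 : ∀ x, 0 ≤ g x := by
    intro x; rw [hgdef]; dsimp only
    exact Finset.sum_nonneg fun y _ => mul_nonneg (hf0 y) (hμ0 _)
  have hgsum : ∑ x, g x = L * K := by
    rw [hgdef, hμdef, hKdef, hLdef]
    dsimp only
    rw [conv_sum]
  -- Step 4 : lower bound for T = ∑ g b
  set D : Finset G := (B' + B' + B) \ B with hDdef
  have hT1 : ∑ x, g x * b x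
      = ∑ y, ∑ x : G, ∑ z, f y * μ (x - y) * ((if z ∈ B then (1:ℝ) else 0) * μ (x - z)) := by
    have h1 : ∀ x : G, g x * b x
        = ∑ y, ∑ z, f y * μ (x - y) * ((if z ∈ B then (1:ℝ) else 0) * μ (x - z)) := by
      intro x
      rw [hgdef, hbdef]
      dsimp only
      rw [Finset.sum_mul_sum]
    simp_rw [h1]
    exact Finset.sum_comm
  have hT2 : ∀ y : G, ∑ x : G, ∑ z, f y * μ (x - y) * ((if z ∈ B then (1:ℝ) else 0) * μ (x - z))
      = ∑ c, ∑ d, f y * (μ c * (μ d * (if y + c - d ∈ B then (1:ℝ) else 0))) := by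
    intro y
    rw [← Equiv.sum_comp (Equiv.addLeft y)
      (fun x => ∑ z, f y * μ (x - y) * ((if z ∈ B then (1:ℝ) else 0) * μ (x - z)))]
    simp only [Equiv.coe_addLeft, add_sub_cancel_left]
    refine Finset.sum_congr rfl fun c _ => ?_
    rw [← Equiv.sum_comp (Equiv.subLeft (y + c))
      (fun z => f y * μ c * ((if z ∈ B then (1:ℝ) else 0) * μ (y + c - z)))]
    simp only [Equiv.subLeft_apply, sub_sub_cancel]
    exact Finset.sum_congr rfl fun d _ => by ring
  have hT : ∑ x, g x * b x
      = ∑ y, f y * (∑ c, ∑ d, μ c * (μ d * (if y + c - d ∈ B then (1:ℝ) else 0))) := by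
    rw [hT1]
    refine Finset.sum_congr rfl fun y _ => ?_
    rw [hT2 y]
    simp_rw [← Finset.mul_sum]
  have hK2 : K^2 = ∑ c, ∑ d, μ c * μ d := by
    rw [← hμsum, sq, Finset.sum_mul_sum]
  have hpoint : ∀ y, y ∈ B → ∀ c d : G,
      μ c * μ d - μ c * (μ d * (if y + c - d ∈ B then (1:ℝ) else 0))
        ≤ μ c * (μ d * (if y + c - d ∈ D then (1:ℝ) else 0)) := by
    intro y hy c d
    by_cases hc : c ∈ B'
    · by_cases hd : d ∈ B'
      · have hμc : μ c = 1 := by rw [hμdef]; simp [hc]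
        have hμd : μ d = 1 := by rw [hμdef]; simp [hd]
        rw [hμc, hμd]
        have h0 : (0:ℝ) ≤ (if y + c - d ∈ D then (1:ℝ) else 0) := by split_ifs <;> norm_num
        by_cases hx : y + c - d ∈ B
        · rw [if_pos hx]
          linarith
        · have hmem : y + c - d ∈ B' + B' + B := by
            rw [show y + c - d = c + -d + y from by abel]
            exact Finset.add_mem_add (Finset.add_mem_add hc (hB'symm d hd)) hy
          have hxD : y + c - d ∈ D := by
            rw [hDdef]; exact Finset.mem_sdiff.2 ⟨hmem, hx⟩
          rw [if_neg hx, if_pos hxD]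
          norm_num
      · have hμd : μ d = 0 := by rw [hμdef]; simp [hd]
        simp [hμd]
    · have hμc : μ c = 0 := by rw [hμdef]; simp [hc]
      simp [hμc]
  have hRsum : ∑ y : G, ∑ c, ∑ d, μ c * (μ d * (if y + c - d ∈ D then (1:ℝ) else 0))
      = K^2 * D.card := by
    rw [Finset.sum_comm]
    have h1 : ∀ c : G, ∑ y : G, ∑ d, μ c * (μ d * (if y + c - d ∈ D then (1:ℝ) else 0))
        = μ c * K * D.card := by
      intro c
      rw [Finset.sum_comm]
      have h2 : ∀ d : G, ∑ y : G, μ c * (μ d * (if y + c - d ∈ D then (1:ℝ) else 0))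
          = μ c * μ d * D.card := by
        intro d
        simp_rw [← Finset.mul_sum]
        have h3 : ∑ y : G, (if y + c - d ∈ D then (1:ℝ) else 0) = D.card := by
          have := sum_shift_ind D ((Equiv.addRight c).trans (Equiv.subRight d))
          simpa [Equiv.trans_apply, Equiv.coe_addRight, Equiv.subRight_apply] using this
        rw [h3]; ring
      simp_rw [h2]
      rw [← Finset.sum_mul, ← Finset.mul_sum, hμsum]
    simp_rw [h1]
    rw [← Finset.sum_mul, ← Finset.sum_mul, hμsum]
    ring
  have hkey : ∀ y : G,
      f y * K^2 - (∑ c, ∑ d, μ c * (μ d * (if y + c - d ∈ D then (1:ℝ) else 0)))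
        ≤ f y * (∑ c, ∑ d, μ c * (μ d * (if y + c - d ∈ B then (1:ℝ) else 0))) := by
    intro y
    have hR0 : 0 ≤ ∑ c, ∑ d, μ c * (μ d * (if y + c - d ∈ D then (1:ℝ) else 0)) :=
      Finset.sum_nonneg fun c _ => Finset.sum_nonneg fun d _ =>
        mul_nonneg (hμ0 c) (mul_nonneg (hμ0 d) (by split_ifs <;> norm_num))
    by_cases hfy : f y = 0
    · rw [hfy]; simpa using hR0
    · have hy : y ∈ B := hfB y hfy
      have hQK : (∑ c, ∑ d, μ c * (μ d * (if y + c - d ∈ B then (1:ℝ) else 0))) ≤ K^2 := by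
        rw [hK2]
        refine Finset.sum_le_sum fun c _ => Finset.sum_le_sum fun d _ => ?_
        have ht1 : (if y + c - d ∈ B then (1:ℝ) else 0) ≤ 1 := by split_ifs <;> norm_num
        calc μ c * (μ d * (if y + c - d ∈ B then (1:ℝ) else 0))
            ≤ μ c * (μ d * 1) :=
              mul_le_mul_of_nonneg_left (mul_le_mul_of_nonneg_left ht1 (hμ0 d)) (hμ0 c)
          _ = μ c * μ d := by ring
      have hdiff : K^2 - (∑ c, ∑ d, μ c * (μ d * (if y + c - d ∈ B then (1:ℝ) else 0)))
          ≤ ∑ c, ∑ d, μ c * (μ d * (if y + c - d ∈ D then (1:ℝ) else 0)) := by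
        rw [hK2, ← Finset.sum_sub_distrib]
        refine Finset.sum_le_sum fun c _ => ?_
        rw [← Finset.sum_sub_distrib]
        exact Finset.sum_le_sum fun d _ => hpoint y hy c d
      set Q := ∑ c, ∑ d, μ c * (μ d * (if y + c - d ∈ B then (1:ℝ) else 0)) with hQdef
      have hmul : f y * (K^2 - Q) ≤ 1 * (K^2 - Q) :=
        mul_le_mul_of_nonneg_right (hf1 y) (by linarith [hQK])
      have hexpand : f y * K^2 - f y * Q = f y * (K^2 - Q) := by ring
      linarith [hdiff, hmul, hexpand]
  have hT' : L * K^2 - (D.card : ℝ) * K^2 ≤ ∑ x, g x * b x := by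
    rw [hT]
    calc L * K^2 - (D.card : ℝ) * K^2
        = ∑ y, (f y * K^2
            - (∑ c, ∑ d, μ c * (μ d * (if y + c - d ∈ D then (1:ℝ) else 0)))) := by
          rw [Finset.sum_sub_distrib, ← Finset.sum_mul, hRsum, ← hLdef]
          ring
      _ ≤ ∑ y, f y * (∑ c, ∑ d, μ c * (μ d * (if y + c - d ∈ B then (1:ℝ) else 0))) :=
          Finset.sum_le_sum fun y _ => hkey y
  -- Step 5 : combine
  have hDcard : (D.card : ℝ) ≤ 2 ^ (-4 : ℤ) * ν * α * B.card := hadd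
  have hc3 : (2:ℝ) ^ (-3 : ℤ) = 1/8 := by norm_num
  have hc4 : (2:ℝ) ^ (-4 : ℤ) = 1/16 := by norm_num
  have hsum_g2 : (1 + 2 ^ (-3 : ℤ) * ν) * α * L * K^2 ≤ ∑ x, g x ^ 2 := by
    rw [hexp, hc3]
    have e1 : 2*α*(L * K^2 - (D.card : ℝ) * K^2) ≤ 2*α*(∑ x, g x * b x) :=
      mul_le_mul_of_nonneg_left hT' (by positivity)
    have e2 : α^2 * (∑ x, b x ^ 2) ≤ α^2 * (B.card * K^2) :=
      mul_le_mul_of_nonneg_left hU (sq_nonneg α)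
    have e3 : α^2 * ((B.card : ℝ) * K^2) = α * L * K^2 := by
      rw [← hαB]; ring
    have e4 : 2*α*((D.card : ℝ) * K^2) ≤ (1/8) * ν * α * L * K^2 := by
      rw [hc4] at hDcard
      have m1 : (0:ℝ) ≤ 2*α*K^2 := by positivity
      calc 2*α*((D.card : ℝ) * K^2) = (2*α*K^2) * (D.card : ℝ) := by ring
        _ ≤ (2*α*K^2) * (1/16 * ν * α * ↑B.card) := mul_le_mul_of_nonneg_left hDcard m1
        _ = 1/8 * ν * (α * ↑B.card) * α * K^2 := by ring
        _ = (1/8) * ν * α * L * K^2 := by rw [hαB]; ring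
    have e5 : ν * α * L * (K/2)^2 = 1/4 * (ν * α * L * K^2) := by ring
    linarith [hS, e1, e2, e3, e4, e5]
  obtain ⟨x₀, -, hx₀⟩ := Finset.exists_max_image Finset.univ g ⟨0, Finset.mem_univ 0⟩
  have h7 : ∑ x, g x ^ 2 ≤ g x₀ * (L * K) := by
    calc ∑ x, g x ^ 2 ≤ ∑ x, g x₀ * g x := by
          refine Finset.sum_le_sum fun x _ => ?_
          rw [sq]
          exact mul_le_mul_of_nonneg_right (hx₀ x (Finset.mem_univ x)) (hg0 x)
      _ = g x₀ * (L * K) := by rw [← Finset.mul_sum, hgsum]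
  have h8 : (1 + 2 ^ (-3 : ℤ) * ν) * α * K ≤ g x₀ := by
    have hLK : (0:ℝ) < L * K := mul_pos hLpos hKpos
    have h9 : ((1 + 2 ^ (-3 : ℤ) * ν) * α * K) * (L * K) ≤ g x₀ * (L * K) := by
      rw [show ((1 + 2 ^ (-3 : ℤ) * ν) * α * K) * (L * K)
          = (1 + 2 ^ (-3 : ℤ) * ν) * α * L * K^2 from by ring]
      exact hsum_g2.trans h7
    exact le_of_mul_le_mul_right h9 hLK
  have h10 : g x₀ ≤ ⨆ x : G, |∑ y, f y * if x - y ∈ B' then (1:ℝ) else 0| := by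
    refine (le_abs_self (g x₀)).trans ?_
    have heq : |g x₀| = |∑ y, f y * if x₀ - y ∈ B' then (1:ℝ) else 0| := by
      rw [hgdef, hμdef]
    rw [heq]
    exact le_ciSup hbdd x₀
  exact h8.trans h10
end
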